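/- arXiv:1405.6315 — 9 statements merged into one kernel-verified Lean document; each statement's English description precedes it below -/
import Mathlib

section
/- For all nonnegative integers m and n, the super Catalan number S(m,n) = (2m)!(2n)!/(m!·n!·(m+n)!) is an integer. -/
lemma superCatalan_div_key (k m n : ℕ) :
    m / k + n / k + (m + n) / k ≤ 2 * m / k + 2 * n / k := by
  rcases Nat.eq_zero_or_pos k with rfl | hk
  · simp
  have hm2 : 2 * m / k = 2 * (m % k) / k + 2 * (m / k) := by
    conv_lhs => rw [← Nat.div_add_mod m k]
    rw [show 2 * (k * (m / k) + m % k) = 2 * (m % k) + 2 * (m / k) * k by ring,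
      Nat.add_mul_div_right _ _ hk]
  have hn2 : 2 * n / k = 2 * (n % k) / k + 2 * (n / k) := by
    conv_lhs => rw [← Nat.div_add_mod n k]
    rw [show 2 * (k * (n / k) + n % k) = 2 * (n % k) + 2 * (n / k) * k by ring,
      Nat.add_mul_div_right _ _ hk]
  have hmn : (m + n) / k = (m % k + n % k) / k + (m / k + n / k) := by
    conv_lhs => rw [← Nat.div_add_mod m k, ← Nat.div_add_mod n k]
    rw [show k * (m / k) + m % k + (k * (n / k) + n % k)
        = m % k + n % k + (m / k + n / k) * k by ring,
      Nat.add_mul_div_right _ _ hk]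
  rw [hm2, hn2, hmn]
  have key : (m % k + n % k) / k ≤ 2 * (m % k) / k + 2 * (n % k) / k := by
    set r := m % k
    set t := n % k
    have hr : r < k := Nat.mod_lt _ hk
    have ht : t < k := Nat.mod_lt _ hk
    rcases Nat.lt_or_ge (r + t) k with h | h
    · simp [Nat.div_eq_of_lt h]
    · have h1 : (r + t) / k < 2 := by
        rw [Nat.div_lt_iff_lt_mul hk]; omega
      have h2 : 2 * r ≥ k ∨ 2 * t ≥ k := by omega
      rcases h2 with h2 | h2
      · have h3 : 1 ≤ 2 * r / k := (Nat.one_le_div_iff hk).mpr h2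
        exact (Nat.lt_succ_iff.mp h1).trans (h3.trans (Nat.le_add_right _ _))
      · have h3 : 1 ≤ 2 * t / k := (Nat.one_le_div_iff hk).mpr h2
        exact (Nat.lt_succ_iff.mp h1).trans (h3.trans (Nat.le_add_left _ _))
  omega

theorem superCatalan_integer (m n : ℕ) :
    (Nat.factorial m * Nat.factorial n * Nat.factorial (m + n)) ∣
      Nat.factorial (2 * m) * Nat.factorial (2 * n) := by
  rw [← Nat.factorization_le_iff_dvd (by positivity) (by positivity)]
  intro p
  by_cases hp : p.Prime
  · haveI : Fact p.Prime := ⟨hp⟩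
    set b := Nat.log p (2 * m + 2 * n) + 1 with hb
    have hbound : ∀ x : ℕ, x ≤ 2 * m + 2 * n → Nat.log p x < b := fun x hx =>
      Nat.lt_succ_of_le (Nat.log_mono_right hx)
    simp only [Nat.factorization_mul (Nat.factorial_ne_zero _)
        (Nat.factorial_ne_zero _), Finsupp.add_apply,
      Nat.factorization_mul (Nat.mul_ne_zero (Nat.factorial_ne_zero _)
        (Nat.factorial_ne_zero _)) (Nat.factorial_ne_zero _)]
    rw [Nat.factorization_def _ hp, Nat.factorization_def _ hp,
      Nat.factorization_def _ hp, Nat.factorization_def _ hp,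
      Nat.factorization_def _ hp,
      padicValNat_factorial (hbound m (by omega)),
      padicValNat_factorial (hbound n (by omega)),
      padicValNat_factorial (hbound (m + n) (by omega)),
      padicValNat_factorial (hbound (2 * m) (by omega)),
      padicValNat_factorial (hbound (2 * n) (by omega)),
      ← Finset.sum_add_distrib, ← Finset.sum_add_distrib, ← Finset.sum_add_distrib]
    exact Finset.sum_le_sum fun i _ => superCatalan_div_key (p ^ i) m n
  · simp [Nat.factorization_eq_zero_of_not_prime _ hp]
end

section
/- Von Szily identity: for all nonnegative integers m and n, S(m,n) = Σ_{k∈ℤ} (-1)^k · C(2m, m+k) · C(2n, n-k), where S(m,n) = (2m)!(2n)!/(m!·n!·(m+n)!). -/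
/-- Binomial coefficient `C(a, b)` for an integer lower index, zero when `b < 0`. -/
def chooseZ (a : ℕ) (b : ℤ) : ℕ := if 0 ≤ b then a.choose b.toNat else 0

lemma chooseZ_ne_zero {a : ℕ} {b : ℤ} (h : chooseZ a b ≠ 0) : 0 ≤ b ∧ b ≤ a := by
  unfold chooseZ at h
  split_ifs at h with hb
  · refine ⟨hb, ?_⟩
    by_contra hab
    exact h (Nat.choose_eq_zero_of_lt (by omega))
  · exact absurd rfl h

lemma chooseZ_succ (a : ℕ) (b : ℤ) : chooseZ (a + 1) b = chooseZ a (b - 1) + chooseZ a b := by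
  unfold chooseZ
  rcases lt_trichotomy b 0 with hb | rfl | hb
  · rw [if_neg (by omega), if_neg (by omega), if_neg (by omega)]
  · norm_num
  · rw [if_pos (by omega), if_pos (by omega), if_pos (by omega)]
    have h1 : b.toNat = (b - 1).toNat + 1 := by omega
    rw [h1, Nat.choose_succ_succ']

/-- Generic summand with shifts. -/
def gg (m n : ℕ) (d e : ℤ) (k : ℤ) : ℚ :=
  ((-1 : ℚ) ^ k) * (chooseZ (2 * m) ((m : ℤ) + k + d) : ℚ) * (chooseZ (2 * n) ((n : ℤ) - k + e) : ℚ)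

lemma supp_gg (m n : ℕ) (d e : ℤ) : (Function.support (gg m n d e)).Finite := by
  apply (Set.finite_Icc (-(m : ℤ) - d) ((2 * m : ℤ) - m - d)).subset
  intro k hk
  have hk' : gg m n d e k ≠ 0 := hk
  have h1 : (chooseZ (2 * m) ((m : ℤ) + k + d) : ℚ) ≠ 0 := by
    intro h0
    apply hk'
    unfold gg
    rw [h0]; ring
  have h2 : chooseZ (2 * m) ((m : ℤ) + k + d) ≠ 0 := by exact_mod_cast h1
  obtain ⟨hA, hB⟩ := chooseZ_ne_zero h2
  simp only [Set.mem_Icc]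
  omega

lemma neg_one_zpow_add_one (k : ℤ) : (-1 : ℚ) ^ (k + 1) = -((-1 : ℚ) ^ k) := by
  rw [zpow_add_one₀ (by norm_num : (-1 : ℚ) ≠ 0)]
  ring

lemma neg_one_zpow_sub_one (k : ℤ) : (-1 : ℚ) ^ (k - 1) = -((-1 : ℚ) ^ k) := by
  have := neg_one_zpow_add_one (k - 1)
  rw [sub_add_cancel] at this
  linarith

lemma shift1 (m n : ℕ) : (∑ᶠ k : ℤ, gg m n (-1) 0 k) = - ∑ᶠ k : ℤ, gg m n 0 (-1) k := by
  have key : ∀ k : ℤ, gg m n (-1) 0 (k + 1) = - gg m n 0 (-1) k := by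
    intro k
    unfold gg
    rw [neg_one_zpow_add_one]
    have e1 : (m : ℤ) + (k + 1) + (-1) = (m : ℤ) + k + 0 := by ring
    have e2 : (n : ℤ) - (k + 1) + 0 = (n : ℤ) - k + (-1) := by ring
    rw [e1, e2]; ring
  have comp := finsum_comp_equiv (Equiv.addRight (1 : ℤ)) (f := gg m n (-1) 0)
  have : (∑ᶠ k : ℤ, gg m n (-1) 0 (k + 1)) = ∑ᶠ k : ℤ, gg m n (-1) 0 k := comp
  rw [← this]
  calc (∑ᶠ k : ℤ, gg m n (-1) 0 (k + 1)) = ∑ᶠ k : ℤ, - gg m n 0 (-1) k := by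
        exact finsum_congr key
    _ = - ∑ᶠ k : ℤ, gg m n 0 (-1) k := by
        exact finsum_neg_distrib _

lemma shift2 (m n : ℕ) : (∑ᶠ k : ℤ, gg m n 1 0 k) = - ∑ᶠ k : ℤ, gg m n 0 1 k := by
  have key : ∀ k : ℤ, gg m n 1 0 (k + (-1)) = - gg m n 0 1 k := by
    intro k
    unfold gg
    have hz : (-1 : ℚ) ^ (k + (-1)) = -((-1 : ℚ) ^ k) := by
      have := neg_one_zpow_sub_one k
      rw [show k + (-1) = k - 1 by ring]
      exact this
    rw [hz]
    have e1 : (m : ℤ) + (k + (-1)) + 1 = (m : ℤ) + k + 0 := by ring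
    have e2 : (n : ℤ) - (k + (-1)) + 0 = (n : ℤ) - k + 1 := by ring
    rw [e1, e2]; ring
  have comp := finsum_comp_equiv (Equiv.addRight (-1 : ℤ)) (f := gg m n 1 0)
  have h : (∑ᶠ k : ℤ, gg m n 1 0 (k + (-1))) = ∑ᶠ k : ℤ, gg m n 1 0 k := comp
  rw [← h]
  calc (∑ᶠ k : ℤ, gg m n 1 0 (k + (-1))) = ∑ᶠ k : ℤ, - gg m n 0 1 k := finsum_congr key
    _ = - ∑ᶠ k : ℤ, gg m n 0 1 k := finsum_neg_distrib _

lemma decomp1 (m n : ℕ) (k : ℤ) :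
    gg (m + 1) n 0 0 k = gg m n (-1) 0 k + 2 * gg m n 0 0 k + gg m n 1 0 k := by
  unfold gg
  have h2 : 2 * (m + 1) = (2 * m + 1) + 1 := by ring
  rw [h2, chooseZ_succ, chooseZ_succ, chooseZ_succ]
  push_cast
  have e1 : (m : ℤ) + 1 + k + 0 - 1 - 1 = (m : ℤ) + k + (-1) := by ring
  have e2 : (m : ℤ) + 1 + k + 0 - 1 = (m : ℤ) + k + 0 := by ring
  have e3 : (m : ℤ) + 1 + k + 0 = (m : ℤ) + k + 1 := by ring
  rw [e1, e2, e3]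
  ring

lemma decomp2 (m n : ℕ) (k : ℤ) :
    gg m (n + 1) 0 0 k = gg m n 0 (-1) k + 2 * gg m n 0 0 k + gg m n 0 1 k := by
  unfold gg
  have h2 : 2 * (n + 1) = (2 * n + 1) + 1 := by ring
  rw [h2, chooseZ_succ, chooseZ_succ, chooseZ_succ]
  push_cast
  have e1 : (n : ℤ) + 1 - k + 0 - 1 - 1 = (n : ℤ) - k + (-1) := by ring
  have e2 : (n : ℤ) + 1 - k + 0 - 1 = (n : ℤ) - k + 0 := by ring
  have e3 : (n : ℤ) + 1 - k + 0 = (n : ℤ) - k + 1 := by ring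
  rw [e1, e2, e3]
  ring

lemma sum_three (m n : ℕ) (d e : ℤ) (F : ℤ → ℚ) (hF : (Function.support F).Finite)
    (G : ℤ → ℚ) (hG : (Function.support G).Finite) :
    (∑ᶠ k : ℤ, (F k + 2 * G k + gg m n d e k)) =
      (∑ᶠ k : ℤ, F k) + 2 * (∑ᶠ k : ℤ, G k) + ∑ᶠ k : ℤ, gg m n d e k := by
  have h2G : (Function.support fun k => 2 * G k).Finite :=
    hG.subset (by intro k hk; simp only [Function.mem_support] at *; intro h0; apply hk; rw [h0]; ring)
  have hFG : (Function.support fun k => F k + 2 * G k).Finite := (hF.union h2G).subset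
    (Function.support_add _ _)
  rw [finsum_add_distrib hFG (supp_gg m n d e), finsum_add_distrib hF h2G,
    ← mul_finsum G 2]

lemma T_rec (m n : ℕ) :
    (∑ᶠ k : ℤ, gg (m + 1) n 0 0 k) + (∑ᶠ k : ℤ, gg m (n + 1) 0 0 k) =
      4 * ∑ᶠ k : ℤ, gg m n 0 0 k := by
  have h1 : (∑ᶠ k : ℤ, gg (m + 1) n 0 0 k) =
      (∑ᶠ k : ℤ, gg m n (-1) 0 k) + 2 * (∑ᶠ k : ℤ, gg m n 0 0 k) + ∑ᶠ k : ℤ, gg m n 1 0 k := by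
    rw [← sum_three m n 1 0 (gg m n (-1) 0) (supp_gg m n (-1) 0) (gg m n 0 0) (supp_gg m n 0 0)]
    exact finsum_congr (decomp1 m n)
  have h2 : (∑ᶠ k : ℤ, gg m (n + 1) 0 0 k) =
      (∑ᶠ k : ℤ, gg m n 0 (-1) k) + 2 * (∑ᶠ k : ℤ, gg m n 0 0 k) + ∑ᶠ k : ℤ, gg m n 0 1 k := by
    rw [← sum_three m n 0 1 (gg m n 0 (-1)) (supp_gg m n 0 (-1)) (gg m n 0 0) (supp_gg m n 0 0)]
    exact finsum_congr (decomp2 m n)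
  rw [h1, h2, shift1 m n, shift2 m n]
  ring

/-- The super Catalan number as a rational. -/
def Sc (m n : ℕ) : ℚ :=
  (Nat.factorial (2 * m) * Nat.factorial (2 * n)) /
    (Nat.factorial m * Nat.factorial n * Nat.factorial (m + n))

lemma Sc_rec (m n : ℕ) : Sc (m + 1) n + Sc m (n + 1) = 4 * Sc m n := by
  unfold Sc
  have h1 : 2 * (m + 1) = (2 * m + 1) + 1 := by ring
  have h2 : 2 * (n + 1) = (2 * n + 1) + 1 := by ring
  have e1 : (m + 1) + n = (m + n) + 1 := by ring
  have e2 : m + (n + 1) = (m + n) + 1 := by ring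
  rw [h1, h2, e1, e2]
  simp only [Nat.factorial_succ]
  have A : ((2 * m).factorial : ℚ) ≠ 0 := Nat.cast_ne_zero.mpr (2 * m).factorial_ne_zero
  have B : ((2 * n).factorial : ℚ) ≠ 0 := Nat.cast_ne_zero.mpr (2 * n).factorial_ne_zero
  have C : ((m).factorial : ℚ) ≠ 0 := Nat.cast_ne_zero.mpr m.factorial_ne_zero
  have D : ((n).factorial : ℚ) ≠ 0 := Nat.cast_ne_zero.mpr n.factorial_ne_zero
  have E : ((m + n).factorial : ℚ) ≠ 0 := Nat.cast_ne_zero.mpr (m + n).factorial_ne_zero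
  have F : ((m : ℚ) + 1) ≠ 0 := by positivity
  have G : ((n : ℚ) + 1) ≠ 0 := by positivity
  have H : ((m : ℚ) + n + 1) ≠ 0 := by positivity
  push_cast
  field_simp
  ring

lemma T_base (n : ℕ) : (∑ᶠ k : ℤ, gg 0 n 0 0 k) = Sc 0 n := by
  have h1 : (∑ᶠ k : ℤ, gg 0 n 0 0 k) = gg 0 n 0 0 0 := by
    apply finsum_eq_single
    intro k hk
    unfold gg
    have : chooseZ (2 * 0) ((0 : ℕ) + k + 0) = 0 := by
      unfold chooseZ
      split_ifs with hb
      · apply Nat.choose_eq_zero_of_lt; omega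
      · rfl
    rw [this]
    push_cast
    ring
  rw [h1]
  unfold gg Sc chooseZ
  norm_num
  have key : (2 * n).choose n * n.factorial * n.factorial = (2 * n).factorial := by
    have := Nat.choose_mul_factorial_mul_factorial (by omega : n ≤ 2 * n)
    have h2 : 2 * n - n = n := by omega
    rw [h2] at this
    exact this
  have D : ((n).factorial : ℚ) ≠ 0 := Nat.cast_ne_zero.mpr n.factorial_ne_zero
  field_simp
  exact_mod_cast (show (2 * n).choose n * n.factorial ^ 2 = (2 * n).factorial by rw [sq, ← mul_assoc]; exact key)

lemma main_eq (m : ℕ) : ∀ n : ℕ, Sc m n = ∑ᶠ k : ℤ, gg m n 0 0 k := by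
  induction m with
  | zero => intro n; exact (T_base n).symm
  | succ m ih =>
    intro n
    have hT := T_rec m n
    have hS := Sc_rec m n
    have h1 := ih n
    have h2 := ih (n + 1)
    linarith

theorem von_szily (m n : ℕ) :
    ((Nat.factorial (2 * m) * Nat.factorial (2 * n) : ℚ)) /
      (Nat.factorial m * Nat.factorial n * Nat.factorial (m + n)) =
    ∑ᶠ k : ℤ, ((-1 : ℚ) ^ k) * (chooseZ (2 * m) (m + k) : ℚ) * (chooseZ (2 * n) (n - k) : ℚ) := by
  have := main_eq m n
  unfold Sc at this
  rw [this]
  apply finsum_congr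
  intro k
  unfold gg
  rw [add_zero, add_zero]
end

section
/- The n×n super Catalan matrix S has the factorization S = L·D·Lᵀ, where L(m,k) = C(2m, m+k), D is diagonal with D(0,0) = 1 and D(m,m) = (-1)^m·2 for m > 0, and S(i,j) = (2i)!(2j)!/(i!·j!·(i+j)!), matrices over ℚ (or ℤ) indexed by 0 ≤ i,j,k < n. -/
open Finset

private noncomputable def AA (i k : ℕ) : ℚ := (Nat.choose (2*i) (i+k) : ℚ)

private noncomputable def SS (i j : ℕ) : ℚ :=
  (Nat.factorial (2*i) * Nat.factorial (2*j) : ℚ) /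
    (Nat.factorial i * Nat.factorial j * Nat.factorial (i+j))

private noncomputable def FF (i j M : ℕ) : ℚ :=
  AA i 0 * AA j 0 + 2 * ∑ k ∈ range M, (-1:ℚ)^(k+1) * AA i (k+1) * AA j (k+1)

private lemma AA_zero (i k : ℕ) (h : i < k) : AA i k = 0 := by
  unfold AA
  rw [Nat.choose_eq_zero_of_lt (by omega)]
  norm_num

private lemma pascal2 (i k : ℕ) : AA (i+1) (k+1) = AA i k + 2 * AA i (k+1) + AA i (k+2) := by
  unfold AA
  have h1 : (2*(i+1)).choose ((i+1)+(k+1)) =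
      (2*i).choose (i+k) + 2 * (2*i).choose (i+k+1) + (2*i).choose (i+k+2) := by
    have e1 : 2*(i+1) = (2*i+1)+1 := by omega
    have e2 : (i+1)+(k+1) = (i+k+1)+1 := by omega
    rw [e1, e2, Nat.choose_succ_succ]
    have e3 : (2*i+1) = (2*i)+1 := rfl
    have e4 : (i+k+1) = (i+k)+1 := rfl
    rw [e3, Nat.choose_succ_succ (2*i) (i+k), Nat.choose_succ_succ (2*i) (i+k+1)]
    ring
  rw [h1]
  push_cast
  ring

private lemma pascal0 (i : ℕ) : AA (i+1) 0 = 2 * AA i 0 + 2 * AA i 1 := by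
  unfold AA
  have e1 : 2*(i+1) = (2*i+1)+1 := by omega
  have e2 : (i+1)+0 = i+1 := rfl
  have hsymm : (2*i+1).choose i = (2*i+1).choose (i+1) := by
    have := Nat.choose_symm (n := 2*i+1) (k := i+1) (by omega)
    have e : 2*i+1 - (i+1) = i := by omega
    rw [e] at this
    exact this
  have h1 : (2*(i+1)).choose ((i+1)+0) =
      2 * (2*i).choose i + 2 * (2*i).choose (i+1) := by
    rw [e1, e2, Nat.choose_succ_succ, hsymm, Nat.choose_succ_succ (2*i) i]
    ring
  rw [h1]
  simp only [Nat.add_zero]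
  push_cast
  ring

private lemma FF_rec (i j M : ℕ) (hM : i + 1 ≤ M) :
    FF (i+1) j M + FF i (j+1) M = 4 * FF i j M := by
  set T : ℕ → ℚ := fun k => AA i k * AA j (k+1) + AA i (k+1) * AA j k with hT
  have key : ∑ k ∈ range M, ((-1:ℚ)^(k+1) * AA (i+1) (k+1) * AA j (k+1)
      + (-1:ℚ)^(k+1) * AA i (k+1) * AA (j+1) (k+1)
      - 4 * ((-1:ℚ)^(k+1) * AA i (k+1) * AA j (k+1)))
      = (-1:ℚ)^M * T M - (-1:ℚ)^0 * T 0 := by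
    rw [← Finset.sum_range_sub (fun k => (-1:ℚ)^k * T k)]
    apply Finset.sum_congr rfl
    intro k _
    rw [pascal2 i k, pascal2 j k]
    simp only [hT]
    ring
  have hTM : T M = 0 := by
    simp only [hT, AA_zero i M (by omega), AA_zero i (M+1) (by omega)]
    ring
  rw [hTM] at key
  have sum_split : ∑ k ∈ range M, ((-1:ℚ)^(k+1) * AA (i+1) (k+1) * AA j (k+1)
      + (-1:ℚ)^(k+1) * AA i (k+1) * AA (j+1) (k+1)
      - 4 * ((-1:ℚ)^(k+1) * AA i (k+1) * AA j (k+1)))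
      = (∑ k ∈ range M, (-1:ℚ)^(k+1) * AA (i+1) (k+1) * AA j (k+1))
        + (∑ k ∈ range M, (-1:ℚ)^(k+1) * AA i (k+1) * AA (j+1) (k+1))
        - 4 * ∑ k ∈ range M, (-1:ℚ)^(k+1) * AA i (k+1) * AA j (k+1) := by
    rw [Finset.sum_sub_distrib, Finset.sum_add_distrib, Finset.mul_sum]
  rw [sum_split] at key
  have e1 : FF (i+1) j M = (2 * AA i 0 + 2 * AA i 1) * AA j 0
      + 2 * ∑ k ∈ range M, (-1:ℚ)^(k+1) * AA (i+1) (k+1) * AA j (k+1) := by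
    rw [FF, pascal0 i]
  have e2 : FF i (j+1) M = AA i 0 * (2 * AA j 0 + 2 * AA j 1)
      + 2 * ∑ k ∈ range M, (-1:ℚ)^(k+1) * AA i (k+1) * AA (j+1) (k+1) := by
    rw [FF, pascal0 j]
  have e3 : FF i j M = AA i 0 * AA j 0
      + 2 * ∑ k ∈ range M, (-1:ℚ)^(k+1) * AA i (k+1) * AA j (k+1) := rfl
  have hT0 : T 0 = AA i 0 * AA j 1 + AA i 1 * AA j 0 := rfl
  rw [hT0] at key
  rw [e1, e2, e3]
  simp only [pow_zero] at key
  linarith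

private lemma SS_rec (i j : ℕ) : SS (i+1) j + SS i (j+1) = 4 * SS i j := by
  unfold SS
  have h2i : (2*(i+1)) = (2*i+1)+1 := by ring
  have h2j : (2*(j+1)) = (2*j+1)+1 := by omega
  have hij1 : (i+1)+j = (i+j)+1 := by omega
  have hij2 : i+(j+1) = (i+j)+1 := by omega
  rw [h2i, h2j, hij1, hij2]
  simp only [Nat.factorial_succ]
  have f1 : (Nat.factorial i : ℚ) ≠ 0 := Nat.cast_ne_zero.mpr (Nat.factorial_ne_zero i)
  have f2 : (Nat.factorial j : ℚ) ≠ 0 := Nat.cast_ne_zero.mpr (Nat.factorial_ne_zero j)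
  have f3 : (Nat.factorial (i+j) : ℚ) ≠ 0 := Nat.cast_ne_zero.mpr (Nat.factorial_ne_zero _)
  have f4 : (Nat.factorial (2*i) : ℚ) ≠ 0 := Nat.cast_ne_zero.mpr (Nat.factorial_ne_zero _)
  have f5 : (Nat.factorial (2*j) : ℚ) ≠ 0 := Nat.cast_ne_zero.mpr (Nat.factorial_ne_zero _)
  have g1 : ((i:ℚ)+1) ≠ 0 := by positivity
  have g2 : ((j:ℚ)+1) ≠ 0 := by positivity
  have g3 : ((i:ℚ)+(j:ℚ)+1) ≠ 0 := by positivity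
  push_cast
  field_simp
  ring

private lemma FF_eq_SS : ∀ i j M, i ≤ M → FF i j M = SS i j := by
  intro i
  induction i with
  | zero =>
    intro j M _
    have hz : ∀ k ∈ range M, (-1:ℚ)^(k+1) * AA 0 (k+1) * AA j (k+1) = 0 := by
      intro k _
      rw [AA_zero 0 (k+1) (by omega)]
      ring
    unfold FF
    rw [Finset.sum_eq_zero hz]
    have hA0 : AA 0 0 = 1 := by unfold AA; norm_num
    have hAj : AA j 0 = (Nat.choose (2*j) j : ℚ) := by unfold AA; rw [Nat.add_zero]
    rw [hA0, hAj]
    unfold SS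
    have hc : (Nat.choose (2*j) j) * (Nat.factorial j * Nat.factorial j) = Nat.factorial (2*j) := by
      have := Nat.choose_mul_factorial_mul_factorial (n := 2*j) (k := j) (by omega)
      have e : 2*j - j = j := by omega
      rw [e] at this
      rw [← this]; ring
    have f2 : (Nat.factorial j : ℚ) ≠ 0 := Nat.cast_ne_zero.mpr (Nat.factorial_ne_zero j)
    rw [eq_div_iff (mul_ne_zero (mul_ne_zero (Nat.cast_ne_zero.mpr (Nat.factorial_ne_zero _)) (Nat.cast_ne_zero.mpr (Nat.factorial_ne_zero _))) (Nat.cast_ne_zero.mpr (Nat.factorial_ne_zero _)))]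
    simp only [Nat.mul_zero, Nat.zero_mul, Nat.factorial_zero, Nat.zero_add]
    push_cast [← hc]
    ring
  | succ i ih =>
    intro j M hM
    have h1 := FF_rec i j M hM
    have h2 := ih j M (by omega)
    have h3 := ih (j+1) M (by omega)
    have h4 := SS_rec i j
    linarith

theorem superCatalan_eq_LDLt (n : ℕ) :
    (Matrix.of fun i j : Fin n =>
        ((Nat.factorial (2 * (i : ℕ)) * Nat.factorial (2 * (j : ℕ)) : ℚ)) /
          (Nat.factorial (i : ℕ) * Nat.factorial (j : ℕ) * Nat.factorial ((i : ℕ) + (j : ℕ)))) =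
    (Matrix.of fun m k : Fin n => ((Nat.choose (2 * (m : ℕ)) ((m : ℕ) + (k : ℕ)) : ℚ))) *
      (Matrix.diagonal fun m : Fin n =>
        if (m : ℕ) = 0 then (1 : ℚ) else (-1) ^ (m : ℕ) * 2) *
      Matrix.transpose (Matrix.of fun m k : Fin n => ((Nat.choose (2 * (m : ℕ)) ((m : ℕ) + (k : ℕ)) : ℚ))) := by
  ext i j
  match n, i with
  | n+1, i =>
  rw [Matrix.mul_assoc, Matrix.mul_apply]
  simp only [Matrix.diagonal_mul, Matrix.transpose_apply, Matrix.of_apply]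
  have hsum : ∀ k : Fin (n+1),
      (Nat.choose (2 * (i:ℕ)) ((i:ℕ) + (k:ℕ)) : ℚ) *
        ((if (k:ℕ) = 0 then (1:ℚ) else (-1)^(k:ℕ) * 2) *
          (Nat.choose (2 * (j:ℕ)) ((j:ℕ) + (k:ℕ)) : ℚ))
      = AA i k * ((if (k:ℕ) = 0 then (1:ℚ) else (-1)^(k:ℕ) * 2) * AA j k) := by
    intro k; rfl
  rw [Finset.sum_congr rfl (fun k _ => hsum k)]
  rw [Fin.sum_univ_eq_sum_range
    (fun k => AA i k * ((if k = 0 then (1:ℚ) else (-1)^k * 2) * AA j k))]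
  rw [Finset.sum_range_succ']
  simp only [Nat.succ_ne_zero, if_false, if_true, Nat.add_eq_zero, and_false]
  have : ∑ k ∈ range n, AA ↑i (k+1) * ((-1:ℚ)^(k+1) * 2 * AA ↑j (k+1))
      = 2 * ∑ k ∈ range n, (-1:ℚ)^(k+1) * AA ↑i (k+1) * AA ↑j (k+1) := by
    rw [Finset.mul_sum]
    apply Finset.sum_congr rfl
    intro k _
    ring
  rw [this]
  have hF : AA ↑i 0 * (1 * AA ↑j 0) + 2 * ∑ k ∈ range n, (-1:ℚ)^(k+1) * AA ↑i (k+1) * AA ↑j (k+1)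
      = FF ↑i ↑j n := by
    unfold FF; ring
  have goal2 : (2 * ∑ k ∈ range n, (-1:ℚ)^(k+1) * AA ↑i (k+1) * AA ↑j (k+1))
      + AA ↑i 0 * (1 * AA ↑j 0) = SS ↑i ↑j := by
    rw [← FF_eq_SS ↑i ↑j n (by omega), ← hF]; ring
  rw [goal2]
  rfl
end

section
/- Let L be the n×n integer matrix with L(m,k) = C(2m, m+k). Then L is invertible over ℤ, and the entries of column 0 of L⁻¹ satisfy: L⁻¹(0,0) = 1 and L⁻¹(i,0) is even for all 0 < i < n. -/
lemma two_dvd_central_binom {k : ℕ} (hk : 0 < k) : 2 ∣ Nat.choose (2 * k) k := by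
  obtain ⟨j, rfl⟩ := Nat.exists_eq_add_of_lt hk
  simp only [zero_add]
  have h : 2 * (j + 1) = (2 * j + 1) + 1 := by ring
  rw [h, Nat.choose_succ_succ', Nat.choose_symm_half]
  exact ⟨(2 * j + 1).choose j, by ring⟩

theorem L_inv_column_zero (n : ℕ) (hn : 0 < n) :
    IsUnit (Matrix.of fun m k : Fin n =>
        ((Nat.choose (2 * (m : ℕ)) ((m : ℕ) + (k : ℕ)) : ℤ))).det ∧
    (Matrix.of fun m k : Fin n =>
        ((Nat.choose (2 * (m : ℕ)) ((m : ℕ) + (k : ℕ)) : ℤ)))⁻¹ ⟨0, hn⟩ ⟨0, hn⟩ = 1 ∧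
    ∀ i : Fin n, 0 < (i : ℕ) →
      2 ∣ (Matrix.of fun m k : Fin n =>
        ((Nat.choose (2 * (m : ℕ)) ((m : ℕ) + (k : ℕ)) : ℤ)))⁻¹ i ⟨0, hn⟩ := by
  set A : Matrix (Fin n) (Fin n) ℤ := Matrix.of fun m k : Fin n =>
      ((Nat.choose (2 * (m : ℕ)) ((m : ℕ) + (k : ℕ)) : ℤ)) with hA
  have htri : A.BlockTriangular OrderDual.toDual := by
    intro i j hij
    have hij' : (i : ℕ) < (j : ℕ) := hij
    have : 2 * (i : ℕ) < (i : ℕ) + (j : ℕ) := by omega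
    simp [hA, Nat.choose_eq_zero_of_lt this]
  have hdet : A.det = 1 := by
    rw [Matrix.det_of_lowerTriangular A htri]
    have : ∀ i : Fin n, A i i = 1 := by
      intro i
      simp [hA, two_mul, Nat.choose_self]
    simp [this]
  have hunit : IsUnit A.det := by rw [hdet]; exact isUnit_one
  have hmul : A * A⁻¹ = 1 := Matrix.mul_nonsing_inv A hunit
  have hmul' : A⁻¹ * A = 1 := Matrix.nonsing_inv_mul A hunit
  refine ⟨hunit, ?_, ?_⟩
  · -- entry (0,0)
    have h00 := congrFun (congrFun hmul ⟨0, hn⟩) ⟨0, hn⟩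
    rw [Matrix.mul_apply] at h00
    have hrow : ∀ k : Fin n, A ⟨0, hn⟩ k = if k = ⟨0, hn⟩ then 1 else 0 := by
      intro k
      by_cases h : k = ⟨0, hn⟩
      · subst h; simp [hA]
      · have hk : 0 < (k : ℕ) := Nat.pos_of_ne_zero (fun h' => h (Fin.ext h'))
        simp only [hA, Matrix.of_apply]
        rw [if_neg h, Nat.choose_eq_zero_of_lt (by omega)]
        simp
      -- done
    rw [Finset.sum_congr rfl (fun k _ => by rw [hrow k])] at h00
    simp only [ite_mul, one_mul, zero_mul] at h00
    rw [Finset.sum_ite_eq' Finset.univ ⟨0, hn⟩ (fun k => A⁻¹ k ⟨0, hn⟩)] at h00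
    simpa using h00
  · intro i hi
    -- work mod 2
    have hcast : ((A⁻¹ i ⟨0, hn⟩ : ℤ) : ZMod 2) = 0 := by
      set φ : ℤ →+* ZMod 2 := Int.castRingHom (ZMod 2)
      have hm : A⁻¹.map φ * A.map φ = 1 := by
        rw [← Matrix.map_mul, hmul', Matrix.map_one φ (map_zero φ) (map_one φ)]
      have hcol : ∀ k : Fin n, (A.map φ) k ⟨0, hn⟩ = if k = ⟨0, hn⟩ then 1 else 0 := by
        intro k
        by_cases h : k = ⟨0, hn⟩
        · subst h; simp [hA, φ]
        · have hk : 0 < (k : ℕ) := Nat.pos_of_ne_zero (fun h' => h (Fin.ext h'))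
          rw [if_neg h]
          simp only [Matrix.map_apply, hA, Matrix.of_apply]
          have : ((k : Fin n) : ℕ) + ((⟨0, hn⟩ : Fin n) : ℕ) = (k : ℕ) := by simp
          rw [this]
          obtain ⟨c, hc⟩ := two_dvd_central_binom hk
          show ((((2 * (k:ℕ)).choose (k:ℕ) : ℤ)) : ZMod 2) = 0
          rw [hc]
          push_cast
          simp
          exact Or.inl (by decide)
      have hval := congrFun (congrFun hm i) ⟨0, hn⟩
      rw [Matrix.mul_apply] at hval
      rw [Finset.sum_congr rfl (fun k _ => by rw [hcol k])] at hval
      simp only [mul_ite, mul_one, mul_zero] at hval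
      rw [Finset.sum_ite_eq' Finset.univ ⟨0, hn⟩ (fun k => (A⁻¹.map φ) i k)] at hval
      have hne : i ≠ ⟨0, hn⟩ := by
        intro h; rw [h] at hi; simp at hi
      simp only [Finset.mem_univ, if_true] at hval
      rw [Matrix.one_apply_ne hne] at hval
      simpa [φ, Matrix.map_apply] using hval
    exact (ZMod.intCast_zmod_eq_zero_iff_dvd _ 2).mp hcast
end

section
/- The n×n reciprocal Pascal matrix R, with entries R(i,j) = 1/C(i+j,i) over ℚ, is invertible, and every entry of R⁻¹ is an integer. -/
open Finset Polynomial



noncomputable def Fps (a : ℕ) : PowerSeries ℤ :=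
  PowerSeries.mk fun j => (-1 : ℤ) ^ j * (a + j - 1).choose j

lemma Fps_mul_one_add_X (a : ℕ) :
    Fps (a + 1) * (1 + PowerSeries.X) = Fps a := by
  ext n
  rw [mul_add, mul_one, map_add]
  cases n with
  | zero => simp [Fps, PowerSeries.coeff_zero_eq_constantCoeff, mul_comm]
  | succ n =>
      rw [mul_comm _ PowerSeries.X, PowerSeries.coeff_succ_X_mul]
      simp only [Fps, PowerSeries.coeff_mk]
      have h1 : a + 1 + (n+1) - 1 = (a + n) + 1 := by omega
      have h2 : a + 1 + n - 1 = a + n := by omega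
      have h3 : a + (n+1) - 1 = a + n := by omega
      rw [h1, h2, h3, Nat.choose_succ_succ' (a+n) n]
      push_cast [pow_succ]
      ring

lemma Fps_mul_pow (a : ℕ) : Fps a * (1 + PowerSeries.X) ^ a = 1 := by
  induction a with
  | zero =>
      rw [pow_zero, mul_one]
      ext n
      cases n with
      | zero => simp [Fps]
      | succ n => simp [Fps, Nat.choose_eq_zero_of_lt (show n + 1 - 1 < n + 1 by omega)]
  | succ a ih =>
      calc Fps (a+1) * (1 + PowerSeries.X) ^ (a+1)
          = (Fps (a+1) * (1 + PowerSeries.X)) * (1 + PowerSeries.X) ^ a := by ring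
        _ = Fps a * (1 + PowerSeries.X) ^ a := by rw [Fps_mul_one_add_X]
        _ = 1 := ih

lemma coeff_one_add_X_pow_ps (a j : ℕ) :
    PowerSeries.coeff (R := ℤ) j ((1 + PowerSeries.X) ^ a) = a.choose j := by
  have : ((1 + PowerSeries.X : PowerSeries ℤ)) = ((1 + Polynomial.X : Polynomial ℤ) : PowerSeries ℤ) := by
    push_cast
    ring
  rw [this, ← Polynomial.coe_pow, Polynomial.coeff_coe, Polynomial.coeff_one_add_X_pow]

lemma idA' (i k : ℕ) :
    ∑ j ∈ range (k+1), (-1:ℤ)^j * ((k+j-1).choose j) * ((i+k).choose (k-j))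
      = (i.choose k) := by
  have key : Fps k * (1 + PowerSeries.X) ^ (k + i) = (1 + PowerSeries.X) ^ i := by
    rw [pow_add, ← mul_assoc, Fps_mul_pow, one_mul]
  have h2 := congrArg (PowerSeries.coeff k) key
  rw [PowerSeries.coeff_mul, coeff_one_add_X_pow_ps] at h2
  rw [Finset.Nat.sum_antidiagonal_eq_sum_range_succ
    (f := fun a b => (PowerSeries.coeff a) (Fps k) * (PowerSeries.coeff b) ((1 + PowerSeries.X) ^ (k + i)))] at h2
  simp only [Fps, PowerSeries.coeff_mk, coeff_one_add_X_pow_ps] at h2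
  rw [← h2]
  apply Finset.sum_congr rfl
  intro j hj
  rw [add_comm i k]


def Wint (k i : ℕ) : ℤ := (-1)^i * (k.choose i) * ((k + i - 1).choose i)

def cint (k : ℕ) : ℤ := if k = 0 then 1 else 2 * (-1)^k


lemma comp_X_add_one_coeff (q : Polynomial ℚ) (k : ℕ) :
    (q.comp (X + 1)).coeff k = ∑ t ∈ range (q.natDegree + 1), q.coeff t * (t.choose k) := by
  conv_lhs => rw [q.as_sum_range' (q.natDegree + 1) (Nat.lt_succ_self _)]
  rw [Polynomial.sum_comp, Polynomial.finset_sum_coeff]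
  apply Finset.sum_congr rfl
  intro t _
  rw [← C_mul_X_pow_eq_monomial, mul_comp, C_comp, pow_comp, X_comp,
    Polynomial.coeff_C_mul, Polynomial.coeff_X_add_one_pow]

lemma delta_coeff (q : Polynomial ℚ) (N : ℕ) (h : q.natDegree ≤ N + 1) (k : ℕ) (hk : N ≤ k) :
    (q.comp (X + 1) - q).coeff k =
      if k = N then (N + 1 : ℚ) * q.coeff (N + 1) else 0 := by
  rw [Polynomial.coeff_sub, comp_X_add_one_coeff]
  have hsub : range (q.natDegree + 1) ⊆ range (N + 2) := by
    apply Finset.range_subset_range.2; omega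
  rw [Finset.sum_subset hsub (by
    intro t ht hnt
    rw [Polynomial.coeff_eq_zero_of_natDegree_lt (by
      simp only [mem_range] at ht hnt; omega), zero_mul])]
  rcases eq_or_ne k N with rfl | hne
  · rw [Finset.sum_range_succ, Finset.sum_range_succ]
    rw [Finset.sum_eq_zero (by
      intro t ht
      simp only [mem_range] at ht
      rw [Nat.choose_eq_zero_of_lt (by omega), Nat.cast_zero, mul_zero])]
    simp [Nat.choose_succ_self_right]
    ring
  · -- k > N
    have hkN : N + 1 ≤ k := by omega
    rw [if_neg hne]
    have : ∑ t ∈ range (N + 2), q.coeff t * (t.choose k : ℚ) = q.coeff k := by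
      rcases lt_or_ge k (N + 2) with hlt | hge
      · rw [Finset.sum_eq_single k]
        · simp
        · intro t ht htk
          simp only [mem_range] at ht
          rcases lt_or_ge t k with h1 | h2
          · rw [Nat.choose_eq_zero_of_lt h1, Nat.cast_zero, mul_zero]
          · omega
        · intro h; exact absurd (mem_range.2 hlt) h
      · rw [Finset.sum_eq_zero, Polynomial.coeff_eq_zero_of_natDegree_lt (by omega)]
        intro t ht
        simp only [mem_range] at ht
        rw [Nat.choose_eq_zero_of_lt (by omega), Nat.cast_zero, mul_zero]
    rw [this, sub_self]

lemma alt_pascal_sum (N : ℕ) (g : ℕ → ℚ) :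
    ∑ j ∈ range (N+2), (-1:ℚ)^j * ((N+1).choose j) * g j
      = (∑ j ∈ range (N+1), (-1:ℚ)^j * (N.choose j) * g j)
        - ∑ j ∈ range (N+1), (-1:ℚ)^j * (N.choose j) * g (j+1) := by
  have hA : ∑ j ∈ range (N+1), (-1:ℚ)^j * (N.choose j) * g j
      = (∑ j ∈ range N, (-1:ℚ)^(j+1) * (N.choose (j+1)) * g (j+1)) + g 0 := by
    rw [Finset.sum_range_succ' (fun j => (-1:ℚ)^j * (N.choose j) * g j) N]
    simp
  have hthird : ∑ j ∈ range (N+1), (-1:ℚ)^j * (N.choose (j+1)) * g (j+1)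
      = g 0 - ∑ j ∈ range (N+1), (-1:ℚ)^j * (N.choose j) * g j := by
    rw [Finset.sum_range_succ, Nat.choose_succ_self, Nat.cast_zero, mul_zero, zero_mul, add_zero,
      hA]
    have : ∑ j ∈ range N, (-1:ℚ)^j * (N.choose (j+1)) * g (j+1)
        = -∑ j ∈ range N, (-1:ℚ)^(j+1) * (N.choose (j+1)) * g (j+1) := by
      rw [← Finset.sum_neg_distrib]
      apply Finset.sum_congr rfl
      intro j _
      rw [pow_succ]
      ring
    rw [this]
    ring
  rw [Finset.sum_range_succ' (fun j => (-1:ℚ)^j * ((N+1).choose j) * g j) (N+1)]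
  have expand : ∀ j, (-1:ℚ)^(j+1) * (((N+1).choose (j+1) : ℕ) : ℚ) * g (j+1)
      = -((-1)^j * (N.choose j) * g (j+1)) - (-1)^j * (N.choose (j+1)) * g (j+1) := by
    intro j
    rw [Nat.choose_succ_succ, Nat.cast_add, pow_succ]
    ring
  simp only [expand]
  rw [Finset.sum_sub_distrib, Finset.sum_neg_distrib, hthird]
  simp
  ring

lemma finite_diff_poly : ∀ (N : ℕ) (q : Polynomial ℚ) (x₀ : ℚ), q.natDegree ≤ N →
    ∑ j ∈ range (N+1), (-1:ℚ)^j * (N.choose j) * q.eval (x₀ + j)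
      = (-1)^N * N.factorial * q.coeff N := by
  intro N
  induction N with
  | zero =>
      intro q x₀ h
      obtain ⟨a, rfl⟩ := Polynomial.natDegree_eq_zero.1 (Nat.le_zero.1 h)
      simp
  | succ N ih =>
      intro q x₀ h
      have key := alt_pascal_sum N (fun j => q.eval (x₀ + j))
      rw [key]
      set Δ : Polynomial ℚ := q.comp (X + 1) - q with hΔ
      have hΔdeg : Δ.natDegree ≤ N := by
        apply Polynomial.natDegree_le_iff_coeff_eq_zero.2
        intro k hk
        rw [hΔ, delta_coeff q N h k (le_of_lt hk), if_neg (by omega)]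
      have hΔeval : ∀ (x : ℚ), Δ.eval x = q.eval (x + 1) - q.eval x := by
        intro x
        rw [hΔ, Polynomial.eval_sub, Polynomial.eval_comp, Polynomial.eval_add,
          Polynomial.eval_X, Polynomial.eval_one]
      have h2 : ∑ j ∈ range (N+1), (-1:ℚ)^j * (N.choose j) * q.eval (x₀ + ((j:ℕ)+1 : ℕ))
          = ∑ j ∈ range (N+1), (-1:ℚ)^j * (N.choose j) * (q.eval (x₀ + j) + Δ.eval (x₀ + j)) := by
        apply Finset.sum_congr rfl
        intro j _
        have harg : (x₀ + (((j:ℕ)+1 : ℕ) : ℚ)) = (x₀ + j) + 1 := by push_cast; ring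
        rw [harg, hΔeval]
        ring
      rw [h2]
      have h3 : ∑ j ∈ range (N+1), (-1:ℚ)^j * (N.choose j) * (q.eval (x₀ + j) + Δ.eval (x₀ + j))
          = (∑ j ∈ range (N+1), (-1:ℚ)^j * (N.choose j) * q.eval (x₀ + j))
            + ∑ j ∈ range (N+1), (-1:ℚ)^j * (N.choose j) * Δ.eval (x₀ + j) := by
        rw [← Finset.sum_add_distrib]
        apply Finset.sum_congr rfl
        intro j _
        ring
      rw [h3, ih Δ x₀ hΔdeg]
      have hcoef : Δ.coeff N = (N + 1 : ℚ) * q.coeff (N + 1) := by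
        rw [hΔ, delta_coeff q N h N (le_refl _), if_pos rfl]
      rw [hcoef]
      rw [Nat.factorial_succ]
      push_cast [pow_succ]
      ring


noncomputable def qpoly (m : ℕ) : Polynomial ℚ :=
  C (1 / ((m.factorial : ℚ) * m.factorial)) *
    ((∏ t ∈ range m, (X - C (t:ℚ))) * ∏ t ∈ range m, (X + C (t:ℚ)))

lemma prod_desc_eval (k m : ℕ) :
    ∏ t ∈ range m, ((k:ℚ) - t) = (k.descFactorial m : ℚ) := by
  induction m with
  | zero => simp
  | succ m ih =>
      rw [Finset.prod_range_succ, ih, Nat.descFactorial_succ]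
      rcases le_or_gt m k with h | h
      · push_cast [h]
        ring
      · rw [Nat.descFactorial_eq_zero_iff_lt.2 h]
        simp

lemma prod_asc_eval (k m : ℕ) :
    ∏ t ∈ range m, ((k:ℚ) + t) = (k.ascFactorial m : ℚ) := by
  induction m with
  | zero => simp
  | succ m ih =>
      rw [Finset.prod_range_succ, ih, Nat.ascFactorial_succ]
      push_cast
      ring

lemma qpoly_eval_nat (m k : ℕ) :
    (qpoly m).eval (k : ℚ) = (k.choose m : ℚ) * ((k + m - 1).choose m : ℚ) := by
  have e1 : (∏ t ∈ range m, (X - C (t:ℚ))).eval (k:ℚ) = (k.descFactorial m : ℚ) := by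
    rw [Polynomial.eval_prod]
    simp only [Polynomial.eval_sub, Polynomial.eval_X, Polynomial.eval_C]
    exact prod_desc_eval k m
  have e2 : (∏ t ∈ range m, (X + C (t:ℚ))).eval (k:ℚ) = (k.ascFactorial m : ℚ) := by
    rw [Polynomial.eval_prod]
    simp only [Polynomial.eval_add, Polynomial.eval_X, Polynomial.eval_C]
    exact prod_asc_eval k m
  rw [qpoly]
  simp only [Polynomial.eval_mul, Polynomial.eval_C, e1, e2]
  rw [Nat.descFactorial_eq_factorial_mul_choose, Nat.ascFactorial_eq_factorial_mul_choose']
  have : (m.factorial : ℚ) ≠ 0 := Nat.cast_ne_zero.2 m.factorial_ne_zero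
  push_cast
  field_simp

lemma qpoly_eval_neg (m : ℕ) (x : ℚ) : (qpoly m).eval (-x) = (qpoly m).eval x := by
  have h1 : ∀ y : ℚ, (∏ t ∈ range m, (X - C (t:ℚ))).eval y = ∏ t ∈ range m, (y - t) := by
    intro y; rw [Polynomial.eval_prod]; simp
  have h2 : ∀ y : ℚ, (∏ t ∈ range m, (X + C (t:ℚ))).eval y = ∏ t ∈ range m, (y + t) := by
    intro y; rw [Polynomial.eval_prod]; simp
  simp only [qpoly, Polynomial.eval_mul, Polynomial.eval_C, h1, h2]
  have e1 : ∏ t ∈ range m, (-x - (t:ℚ)) = (-1)^m * ∏ t ∈ range m, (x + t) := by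
    calc ∏ t ∈ range m, (-x - (t:ℚ)) = ∏ t ∈ range m, ((-1) * (x + t)) := by
          apply Finset.prod_congr rfl
          intro t _
          ring
      _ = (-1)^m * ∏ t ∈ range m, (x + t) := by
          rw [Finset.prod_mul_distrib, Finset.prod_const, Finset.card_range]
  have e2 : ∏ t ∈ range m, (-x + (t:ℚ)) = (-1)^m * ∏ t ∈ range m, (x - t) := by
    calc ∏ t ∈ range m, (-x + (t:ℚ)) = ∏ t ∈ range m, ((-1) * (x - t)) := by
          apply Finset.prod_congr rfl
          intro t _
          ring
      _ = (-1)^m * ∏ t ∈ range m, (x - t) := by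
          rw [Finset.prod_mul_distrib, Finset.prod_const, Finset.card_range]
  rw [e1, e2]
  have hsq : ((-1:ℚ)^m) * ((-1)^m) = 1 := by
    rw [← pow_add]
    exact Even.neg_one_pow ⟨m, rfl⟩
  linear_combination (1 / ((m.factorial : ℚ) * m.factorial) * (∏ t ∈ range m, (x + t)) *
    (∏ t ∈ range m, (x - t))) * hsq

lemma qpoly_prod_monic (m : ℕ) :
    (((∏ t ∈ range m, (X - C (t:ℚ))) * ∏ t ∈ range m, (X + C (t:ℚ)))).Monic := by
  apply Polynomial.Monic.mul
  · exact monic_prod_of_monic _ _ fun t _ => monic_X_sub_C _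
  · exact monic_prod_of_monic _ _ fun t _ => monic_X_add_C _

lemma qpoly_prod_natDegree (m : ℕ) :
    (((∏ t ∈ range m, (X - C (t:ℚ))) * ∏ t ∈ range m, (X + C (t:ℚ)))).natDegree = 2 * m := by
  rw [Polynomial.Monic.natDegree_mul
    (monic_prod_of_monic _ _ fun t _ => monic_X_sub_C _)
    (monic_prod_of_monic _ _ fun t _ => monic_X_add_C _),
    Polynomial.natDegree_prod_of_monic _ _ (fun t _ => monic_X_sub_C _),
    Polynomial.natDegree_prod_of_monic _ _ (fun t _ => monic_X_add_C _)]
  rw [Finset.sum_congr rfl (fun t (_ : t ∈ range m) => Polynomial.natDegree_X_sub_C (t:ℚ)),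
    Finset.sum_congr rfl (fun t (_ : t ∈ range m) => Polynomial.natDegree_X_add_C (t:ℚ)),
    Finset.sum_const, Finset.card_range, smul_eq_mul, mul_one]
  ring

lemma qpoly_natDegree_le (m : ℕ) : (qpoly m).natDegree ≤ 2 * m := by
  rw [qpoly]
  refine le_trans (Polynomial.natDegree_C_mul_le _ _) ?_
  rw [qpoly_prod_natDegree]

lemma qpoly_coeff_top (m : ℕ) :
    (qpoly m).coeff (2 * m) = 1 / ((m.factorial : ℚ) * m.factorial) := by
  rw [qpoly, Polynomial.coeff_C_mul]
  have h := (qpoly_prod_monic m).coeff_natDegree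
  rw [qpoly_prod_natDegree] at h
  rw [h, mul_one]

lemma neg_one_pow_sub_eq (a b : ℕ) (h : b ≤ a) : ((-1:ℚ))^(a - b) = (-1)^(a+b) := by
  rw [show a + b = (a - b) + 2*b by omega, pow_add, pow_mul]
  simp

lemma idB_core (i m : ℕ) (him : m ≤ i) :
    ∑ k ∈ range (i+1), ((cint k * Wint k m : ℤ) : ℚ) * ((2*i).choose (i+k) : ℚ)
      = if i = m then (((2*i).choose i : ℕ) : ℚ) else 0 := by
  set q : Polynomial ℚ := qpoly m with hq
  set g : ℕ → ℚ := fun j => (-1:ℚ)^j * (((2*i).choose j : ℕ) : ℚ) * q.eval (-(i:ℚ) + j) with hg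
  -- symmetry of g around i
  have gsym : ∀ s : ℕ, 1 ≤ s → s ≤ i → g (i - s) = g (i + s) := by
    intro s h1 h2
    simp only [hg]
    have harg1 : (-(i:ℚ) + ((i - s : ℕ) : ℚ)) = -(s:ℚ) := by
      push_cast [h2]
      ring
    have harg2 : (-(i:ℚ) + ((i + s : ℕ) : ℚ)) = (s:ℚ) := by
      push_cast
      ring
    rw [harg1, harg2, qpoly_eval_neg]
    have hc : (2*i).choose (i - s) = (2*i).choose (i + s) := by
      rw [← Nat.choose_symm (show i + s ≤ 2*i by omega)]
      congr 1
      omega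
    rw [hc, neg_one_pow_sub_eq i s h2, pow_add]
  -- T : full finite-difference sum
  set T : ℚ := ∑ j ∈ range (2*i+1), g j with hT
  have hsplit : T = (∑ j ∈ range i, g j) + ∑ k ∈ range (i+1), g (i + k) := by
    rw [hT, show 2*i+1 = i + (i+1) by ring, Finset.sum_range_add]
  have hrefl : ∑ j ∈ range i, g j = ∑ t ∈ range i, g (i + (t+1)) := by
    rw [← Finset.sum_range_reflect]
    apply Finset.sum_congr rfl
    intro t ht
    simp only [mem_range] at ht
    have : i - 1 - t = i - (t+1) := by omega
    rw [this, gsym (t+1) (by omega) (by omega)]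
  have hsum2 : ∑ k ∈ range (i+1), g (i + k) = (∑ t ∈ range i, g (i + (t+1))) + g i := by
    rw [Finset.sum_range_succ' (fun k => g (i + k)) i]
    simp
  have hTsum : T = g i + 2 * ∑ t ∈ range i, g (i + (t+1)) := by
    rw [hsplit, hrefl, hsum2]
    ring
  -- S* = (-1)^(m+i) * T
  have hq0 : q.eval (-(i:ℚ) + ((i:ℕ):ℚ)) = ((Nat.choose 0 m : ℕ):ℚ) * ((Nat.choose (0 + m - 1) m : ℕ):ℚ) := by
    rw [show (-(i:ℚ) + ((i:ℕ):ℚ)) = ((0:ℕ):ℚ) by push_cast; ring, hq, qpoly_eval_nat]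
  have claim1 : ((cint 0 * Wint 0 m : ℤ) : ℚ) * (((2*i).choose (i+0) : ℕ) : ℚ)
      = (-1:ℚ)^(m+i) * g i := by
    simp only [hg, cint, Wint, if_pos rfl, hq0]
    push_cast
    have h1 : (-1:ℚ)^(m+i) * (-1)^i = (-1)^m := by
      rw [← pow_add, show m + i + i = m + 2*i by ring, pow_add, pow_mul]
      simp
    rw [Nat.add_zero]
    calc (1 * ((-1:ℚ)^m * (Nat.choose 0 m : ℚ) * ((0 + m - 1).choose m : ℚ))) * (((2*i).choose i : ℕ) : ℚ)
        = ((-1:ℚ)^m) * ((((2*i).choose i : ℕ) : ℚ) * ((Nat.choose 0 m : ℚ) * ((0 + m - 1).choose m : ℚ))) := by ring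
      _ = ((-1:ℚ)^(m+i) * (-1)^i) * ((((2*i).choose i : ℕ) : ℚ) * ((Nat.choose 0 m : ℚ) * ((0 + m - 1).choose m : ℚ))) := by rw [h1]
      _ = (-1:ℚ)^(m+i) * ((-1)^i * (((2*i).choose i : ℕ) : ℚ) * ((Nat.choose 0 m : ℚ) * ((0 + m - 1).choose m : ℚ))) := by ring
  have claim2 : ∀ t : ℕ, ((cint (t+1) * Wint (t+1) m : ℤ):ℚ) * (((2*i).choose (i+(t+1)) : ℕ):ℚ)
      = (-1:ℚ)^(m+i) * (2 * g (i + (t+1))) := by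
    intro t
    simp only [hg, cint, Wint, if_neg (Nat.succ_ne_zero t)]
    have harg : (-(i:ℚ) + ((i + (t+1) : ℕ):ℚ)) = (((t+1 : ℕ)):ℚ) := by push_cast; ring
    rw [harg, hq, qpoly_eval_nat]
    have hsgn : (-1:ℚ)^(m+i) * (-1)^(i+(t+1)) = (-1)^m * (-1)^(t+1) := by
      rw [← pow_add, show m + i + (i + (t+1)) = (m + (t+1)) + 2*i by ring, pow_add, pow_mul,
        ← pow_add]
      simp
    have h2i : ((-1:ℚ))^(i*2) = 1 := by
      rw [show i*2 = 2*i by ring, pow_mul]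
      norm_num
    push_cast
    linear_combination (2 * (((t+1).choose m : ℕ) : ℚ) * (((t+1+m-1).choose m : ℕ) : ℚ) *
      (((2*i).choose (i+(t+1)) : ℕ):ℚ)) * hsgn
      + (4 * (((t+1).choose m : ℕ) : ℚ) * (((t+1+m-1).choose m : ℕ) : ℚ) *
      (((2*i).choose (i+(t+1)) : ℕ):ℚ) * (-1:ℚ)^t * (-1:ℚ)^m) * h2i
  have hS : ∑ k ∈ range (i+1), ((cint k * Wint k m : ℤ) : ℚ) * (((2*i).choose (i+k) : ℕ) : ℚ)
      = (-1:ℚ)^(m+i) * T := by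
    rw [Finset.sum_range_succ'
      (fun k => ((cint k * Wint k m : ℤ) : ℚ) * (((2*i).choose (i+k) : ℕ) : ℚ)) i]
    rw [claim1, Finset.sum_congr rfl (fun t (_ : t ∈ range i) => claim2 t), hTsum,
      ← Finset.mul_sum, ← Finset.mul_sum]
    ring
  have hfd := finite_diff_poly (2*i) q (-(i:ℚ)) (le_trans (qpoly_natDegree_le m) (by omega))
  have hTval : T = ((2*i).factorial : ℚ) * q.coeff (2*i) := by
    have h1 : ((-1:ℚ))^(2*i) = 1 := by
      rw [pow_mul]
      norm_num
    rw [hT, hg]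
    rw [hfd, h1, one_mul]
  rw [hS]
  rcases eq_or_lt_of_le him with rfl | hlt
  · -- m = i
    rw [if_pos rfl, hTval, hq, qpoly_coeff_top]
    have hfact := Nat.choose_mul_factorial_mul_factorial (show m ≤ 2*m by omega)
    have h2m : 2*m - m = m := by omega
    rw [h2m] at hfact
    have hne : ((m.factorial : ℚ)) ≠ 0 := Nat.cast_ne_zero.2 m.factorial_ne_zero
    have hcast : (((2*m).choose m : ℕ) : ℚ) * (m.factorial : ℚ) * (m.factorial : ℚ)
        = ((2*m).factorial : ℚ) := by
      exact_mod_cast congrArg (fun x : ℕ => (x : ℚ)) hfact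
    have hsgn : ((-1:ℚ))^(m+m) = 1 := by
      rw [show m + m = 2*m by ring, pow_mul]
      norm_num
    rw [hsgn]
    field_simp
    linear_combination (-1 : ℚ) * hcast
  · -- m < i
    rw [if_neg (by omega), hTval]
    rw [Polynomial.coeff_eq_zero_of_natDegree_lt (lt_of_le_of_lt (qpoly_natDegree_le m) (by omega))]
    ring
lemma choose_ne_zero_q (a b : ℕ) (h : b ≤ a) : ((a.choose b : ℕ) : ℚ) ≠ 0 :=
  Nat.cast_ne_zero.2 (Nat.choose_pos h).ne'

lemma L1q (i j t : ℕ) :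
    ((j+t).choose j : ℚ) * ((i+(j+t)).choose (j+t) : ℚ)
      = ((i+(j+t)).choose t : ℚ) * ((i+j).choose i : ℚ) := by
  rw [Nat.cast_choose ℚ (show j ≤ j + t by omega),
    Nat.cast_choose ℚ (show j + t ≤ i + (j+t) by omega),
    Nat.cast_choose ℚ (show t ≤ i + (j+t) by omega),
    Nat.cast_choose ℚ (show i ≤ i + j by omega)]
  have e1 : j + t - j = t := by omega
  have e2 : i + (j+t) - (j+t) = i := by omega
  have e3 : i + (j+t) - t = i + j := by omega
  have e4 : i + j - i = j := by omega
  rw [e1, e2, e3, e4]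
  have f1 : ((i:ℕ).factorial : ℚ) ≠ 0 := Nat.cast_ne_zero.2 (Nat.factorial_ne_zero _)
  have f2 : ((j:ℕ).factorial : ℚ) ≠ 0 := Nat.cast_ne_zero.2 (Nat.factorial_ne_zero _)
  have f3 : ((t:ℕ).factorial : ℚ) ≠ 0 := Nat.cast_ne_zero.2 (Nat.factorial_ne_zero _)
  have f4 : (((j+t):ℕ).factorial : ℚ) ≠ 0 := Nat.cast_ne_zero.2 (Nat.factorial_ne_zero _)
  have f5 : (((i+j):ℕ).factorial : ℚ) ≠ 0 := Nat.cast_ne_zero.2 (Nat.factorial_ne_zero _)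
  field_simp

lemma ratio_eq (i k : ℕ) :
    ((i.choose k : ℕ) : ℚ) / (((i+k).choose k : ℕ) : ℚ)
      = (((2*i).choose (i+k) : ℕ) : ℚ) / (((2*i).choose i : ℕ) : ℚ) := by
  rcases le_or_gt k i with h | h
  · rw [div_eq_div_iff (choose_ne_zero_q _ _ (by omega)) (choose_ne_zero_q _ _ (by omega))]
    rw [Nat.cast_choose ℚ (show k ≤ i by omega),
      Nat.cast_choose ℚ (show i ≤ 2*i by omega),
      Nat.cast_choose ℚ (show i + k ≤ 2*i by omega),
      Nat.cast_choose ℚ (show k ≤ i + k by omega)]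
    have e1 : i - k = i - k := rfl
    have e2 : 2*i - i = i := by omega
    have e3 : 2*i - (i+k) = i - k := by omega
    have e4 : i + k - k = i := by omega
    rw [e2, e3, e4]
    have f1 : ((Nat.factorial i : ℕ) : ℚ) ≠ 0 := Nat.cast_ne_zero.2 (Nat.factorial_ne_zero _)
    have f2 : ((Nat.factorial k : ℕ) : ℚ) ≠ 0 := Nat.cast_ne_zero.2 (Nat.factorial_ne_zero _)
    have f3 : ((Nat.factorial (i-k) : ℕ) : ℚ) ≠ 0 := Nat.cast_ne_zero.2 (Nat.factorial_ne_zero _)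
    have f4 : ((Nat.factorial (i+k) : ℕ) : ℚ) ≠ 0 := Nat.cast_ne_zero.2 (Nat.factorial_ne_zero _)
    have f5 : ((Nat.factorial (2*i) : ℕ) : ℚ) ≠ 0 := Nat.cast_ne_zero.2 (Nat.factorial_ne_zero _)
    field_simp
  · rw [Nat.choose_eq_zero_of_lt h, Nat.choose_eq_zero_of_lt (show 2*i < i + k by omega)]
    simp

lemma idA_q (i k n : ℕ) (hk : k < n) :
    ∑ j ∈ range n, ((Wint k j : ℤ) : ℚ) / (((i+j).choose i : ℕ) : ℚ)
      = ((i.choose k : ℕ) : ℚ) / (((i+k).choose k : ℕ) : ℚ) := by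
  have htrunc : ∑ j ∈ range n, ((Wint k j : ℤ) : ℚ) / (((i+j).choose i : ℕ) : ℚ)
      = ∑ j ∈ range (k+1), ((Wint k j : ℤ) : ℚ) / (((i+j).choose i : ℕ) : ℚ) := by
    symm
    apply Finset.sum_subset (Finset.range_subset_range.2 (by omega))
    intro j _ hj
    simp only [mem_range, not_lt] at hj
    rw [Wint, Nat.choose_eq_zero_of_lt (by omega)]
    simp
  rw [htrunc]
  have hterm : ∀ j ∈ range (k+1), ((Wint k j : ℤ) : ℚ) / (((i+j).choose i : ℕ) : ℚ)
      = ((-1:ℚ))^j * (((k+j-1).choose j : ℕ) : ℚ) * (((i+k).choose (k-j) : ℕ) : ℚ)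
          / (((i+k).choose k : ℕ) : ℚ) := by
    intro j hj
    simp only [mem_range] at hj
    have hjk : j ≤ k := by omega
    have hL1 := L1q i j (k - j)
    rw [show j + (k-j) = k by omega] at hL1
    rw [Wint]
    push_cast
    rw [div_eq_div_iff (choose_ne_zero_q _ _ (by omega)) (choose_ne_zero_q _ _ (by omega))]
    calc (-1:ℚ)^j * ((k.choose j : ℕ):ℚ) * (((k+j-1).choose j : ℕ):ℚ) * (((i+k).choose k : ℕ):ℚ)
        = (-1:ℚ)^j * (((k+j-1).choose j : ℕ):ℚ) * (((k.choose j : ℕ):ℚ) * (((i+k).choose k : ℕ):ℚ)) := by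
          ring
      _ = (-1:ℚ)^j * (((k+j-1).choose j : ℕ):ℚ) * ((((i+k).choose (k-j) : ℕ):ℚ) * (((i+j).choose i : ℕ):ℚ)) := by
          rw [hL1]
      _ = (-1:ℚ)^j * (((k+j-1).choose j : ℕ):ℚ) * (((i+k).choose (k-j) : ℕ):ℚ) * (((i+j).choose i : ℕ):ℚ) := by
          ring
  rw [Finset.sum_congr rfl hterm, ← Finset.sum_div]
  congr 1
  have := idA' i k
  calc ∑ j ∈ range (k+1), (-1:ℚ)^j * (((k+j-1).choose j : ℕ):ℚ) * (((i+k).choose (k-j) : ℕ):ℚ)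
      = ((∑ j ∈ range (k+1), (-1:ℤ)^j * ((k+j-1).choose j) * ((i+k).choose (k-j)) : ℤ) : ℚ) := by
        push_cast
        rfl
    _ = ((i.choose k : ℕ) : ℚ) := by rw [idA']; push_cast; rfl

theorem reciprocalPascal_inv_integer (n : ℕ) :
    IsUnit (Matrix.of fun i j : Fin n =>
        (1 : ℚ) / (Nat.choose ((i : ℕ) + (j : ℕ)) (i : ℕ))).det ∧
    ∀ i j : Fin n, ∃ z : ℤ,
      (Matrix.of fun i j : Fin n =>
        (1 : ℚ) / (Nat.choose ((i : ℕ) + (j : ℕ)) (i : ℕ)))⁻¹ i j = (z : ℚ) := by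
  set R : Matrix (Fin n) (Fin n) ℚ :=
    Matrix.of (fun i j : Fin n => (1 : ℚ) / (Nat.choose ((i : ℕ) + (j : ℕ)) (i : ℕ))) with hR
  set A : Matrix (Fin n) (Fin n) ℚ :=
    Matrix.of (fun j m : Fin n =>
      ((∑ k ∈ range n, cint k * Wint k (j : ℕ) * Wint k (m : ℕ) : ℤ) : ℚ)) with hA
  have main : R * A = 1 := by
    ext i m
    rw [Matrix.mul_apply]
    have step1 : ∀ j : Fin n, R i j * A j m
        = ∑ k ∈ range n, ((cint k * Wint k (m : ℕ) : ℤ) : ℚ) *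
            (((Wint k (j : ℕ) : ℤ) : ℚ) / ((((i : ℕ) + (j : ℕ)).choose (i : ℕ) : ℕ) : ℚ)) := by
      intro j
      simp only [hR, hA, Matrix.of_apply]
      rw [show ((∑ k ∈ range n, cint k * Wint k (j : ℕ) * Wint k (m : ℕ) : ℤ) : ℚ)
          = ∑ k ∈ range n, ((cint k : ℚ) * ((Wint k (j : ℕ) : ℤ) : ℚ) * ((Wint k (m : ℕ) : ℤ) : ℚ))
          by push_cast; rfl]
      rw [Finset.mul_sum]
      apply Finset.sum_congr rfl
      intro k _
      push_cast
      ring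
    rw [Finset.sum_congr rfl (fun j (_ : j ∈ Finset.univ) => step1 j), Finset.sum_comm]
    have step2 : ∀ k ∈ range n,
        (∑ j : Fin n, ((cint k * Wint k (m : ℕ) : ℤ) : ℚ) *
          (((Wint k (j : ℕ) : ℤ) : ℚ) / ((((i : ℕ) + (j : ℕ)).choose (i : ℕ) : ℕ) : ℚ)))
        = ((cint k * Wint k (m : ℕ) : ℤ) : ℚ) *
            ((((2*(i:ℕ)).choose ((i:ℕ)+k) : ℕ) : ℚ) / (((2*(i:ℕ)).choose (i:ℕ) : ℕ) : ℚ)) := by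
      intro k hk
      rw [← Finset.mul_sum]
      congr 1
      rw [Fin.sum_univ_eq_sum_range
        (fun j => ((Wint k j : ℤ) : ℚ) / ((((i : ℕ) + j).choose (i : ℕ) : ℕ) : ℚ)) n]
      rw [idA_q (i : ℕ) k n (mem_range.1 hk), ratio_eq]
    rw [Finset.sum_congr rfl step2]
    have step3 : ∑ k ∈ range n, ((cint k * Wint k (m : ℕ) : ℤ) : ℚ) *
          ((((2*(i:ℕ)).choose ((i:ℕ)+k) : ℕ) : ℚ) / (((2*(i:ℕ)).choose (i:ℕ) : ℕ) : ℚ))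
        = (∑ k ∈ range n, ((cint k * Wint k (m : ℕ) : ℤ) : ℚ) *
            (((2*(i:ℕ)).choose ((i:ℕ)+k) : ℕ) : ℚ)) / (((2*(i:ℕ)).choose (i:ℕ) : ℕ) : ℚ) := by
      rw [Finset.sum_div]
      apply Finset.sum_congr rfl
      intro k _
      ring
    rw [step3]
    have hnum : ∑ k ∈ range n, ((cint k * Wint k (m : ℕ) : ℤ) : ℚ) *
          (((2*(i:ℕ)).choose ((i:ℕ)+k) : ℕ) : ℚ)
        = if (i:ℕ) = (m:ℕ) then (((2*(i:ℕ)).choose (i:ℕ) : ℕ) : ℚ) else 0 := by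
      rcases le_or_gt (m : ℕ) (i : ℕ) with hmi | hmi
      · have htr : ∑ k ∈ range n, ((cint k * Wint k (m : ℕ) : ℤ) : ℚ) *
              (((2*(i:ℕ)).choose ((i:ℕ)+k) : ℕ) : ℚ)
            = ∑ k ∈ range ((i:ℕ)+1), ((cint k * Wint k (m : ℕ) : ℤ) : ℚ) *
              (((2*(i:ℕ)).choose ((i:ℕ)+k) : ℕ) : ℚ) := by
          symm
          apply Finset.sum_subset (Finset.range_subset_range.2 (by omega))
          intro k _ hk2
          simp only [mem_range, not_lt] at hk2
          rw [Nat.choose_eq_zero_of_lt (by omega)]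
          simp
        rw [htr, idB_core (i:ℕ) (m:ℕ) hmi]
      · rw [if_neg (by omega)]
        apply Finset.sum_eq_zero
        intro k _
        rcases le_or_gt k (i:ℕ) with hki | hki
        · rw [Wint, Nat.choose_eq_zero_of_lt (by omega)]
          push_cast
          ring
        · rw [Nat.choose_eq_zero_of_lt (by omega)]
          push_cast
          ring
    rw [hnum, Matrix.one_apply]
    have hCne : (((2*(i:ℕ)).choose (i:ℕ) : ℕ) : ℚ) ≠ 0 := choose_ne_zero_q _ _ (by omega)
    rcases eq_or_ne i m with rfl | hne
    · rw [if_pos rfl, if_pos rfl, div_self hCne]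
    · rw [if_neg (fun h => hne (Fin.ext h)), if_neg hne, zero_div]
  refine ⟨IsUnit.of_mul_eq_one A.det ?_, ?_⟩
  · rw [← Matrix.det_mul, main, Matrix.det_one]
  · intro i j
    rw [Matrix.inv_eq_right_inv main]
    exact ⟨_, rfl⟩
end

section
/- The n×n reciprocal Pascal matrix R = G⁻¹·L·D·Lᵀ·G⁻¹, where R(i,j) = 1/C(i+j,i), G is diagonal with G(m,m) = C(2m,m), L(m,k) = C(2m,m+k), and D is diagonal with D(0,0)=1 and D(m,m)=(-1)^m·2 for m>0, all over ℚ. -/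
open Polynomial Finset

lemma coeff_one_sub_X_pow (N r : ℕ) :
    ((1 - X : ℚ[X]) ^ N).coeff r = (-1) ^ r * N.choose r := by
  induction N generalizing r with
  | zero => cases r <;> simp [Polynomial.coeff_one]
  | succ N ih =>
    have : (1 - X : ℚ[X]) ^ (N+1) = (1-X)^N - X * (1-X)^N := by ring
    rw [this, coeff_sub]
    cases r with
    | zero => simp [ih]
    | succ r =>
      rw [coeff_X_mul, ih, ih, Nat.choose_succ_succ]
      push_cast; ring

lemma coeff_one_sub_X_sq_pow (N i : ℕ) :
    ((1 - X ^ 2 : ℚ[X]) ^ N).coeff (2 * i) = (-1) ^ i * N.choose i := by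
  have h : (1 - X ^ 2 : ℚ[X]) ^ N = expand ℚ 2 ((1 - X) ^ N) := by
    rw [map_pow, map_sub, map_one, expand_X]
  rw [h, coeff_expand (by norm_num)]
  simp [Nat.mul_div_cancel_left, coeff_one_sub_X_pow]

lemma L1 (N i : ℕ) :
    ∑ r ∈ range (2 * i + 1), (-1 : ℚ) ^ r * N.choose r * N.choose (2 * i - r)
      = (-1) ^ i * N.choose i := by
  have key : ((1 - X : ℚ[X]) ^ N * (1 + X) ^ N).coeff (2 * i) = ((-1:ℚ)) ^ i * N.choose i := by
    rw [← mul_pow]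
    have : (1 - X : ℚ[X]) * (1 + X) = 1 - X ^ 2 := by ring
    rw [this, coeff_one_sub_X_sq_pow]
  rw [coeff_mul, Finset.Nat.sum_antidiagonal_eq_sum_range_succ_mk] at key
  rw [← key]
  apply Finset.sum_congr rfl
  intro r _
  rw [coeff_one_sub_X_pow, coeff_one_add_X_pow]

lemma L2 (i j : ℕ) :
    ∑ k ∈ range (i + 1), (if k = 0 then (1:ℚ) else (-1)^k * 2) *
        ((i+j).choose (i+k)) * ((i+j).choose (j+k)) = ((i+j).choose i : ℚ) := by
  set N := i + j with hN
  have base2 : ∑ r ∈ range (2*i+1),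
      (-1:ℚ)^i * ((-1)^r * N.choose r * N.choose (2*i-r)) = (N.choose i : ℚ) := by
    rw [← Finset.mul_sum, L1 N i, ← mul_assoc, ← pow_add]
    rw [show i + i = 2*i by ring, pow_mul, neg_one_sq, one_pow, one_mul]
  rw [show 2*i+1 = i + (i+1) by ring, Finset.sum_range_add] at base2
  rw [← Finset.sum_range_reflect
      (fun r => (-1:ℚ)^i * ((-1)^r * N.choose r * N.choose (2*i-r))) i] at base2
  rw [Finset.sum_range_succ'
      (fun r => (-1:ℚ)^i * ((-1)^(i+r) * N.choose (i+r) * N.choose (2*i-(i+r)))) i] at base2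
  rw [Finset.sum_range_succ']
  rw [← base2]
  have h0 : (if (0:ℕ) = 0 then (1:ℚ) else (-1)^0*2) * (N.choose (i+0)) * (N.choose (j+0))
      = (-1:ℚ)^i * ((-1)^(i+0) * N.choose (i+0) * N.choose (2*i-(i+0))) := by
    simp only [if_pos rfl, one_mul, add_zero, pow_add]
    rw [show 2*i - i = i by omega, show (N.choose j : ℚ) = N.choose i by
      rw [show j = N - i by omega, Nat.choose_symm (by omega)]]
    have hsq : (-1:ℚ)^i * (-1)^i = 1 := by
      rw [← pow_add, show i + i = 2*i by ring, pow_mul, neg_one_sq, one_pow]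
    simp only [if_true]
    linear_combination (-((N.choose i : ℚ) * (N.choose i))) * hsq
  have hterm : ∀ k ∈ range i,
      (if k+1 = 0 then (1:ℚ) else (-1)^(k+1)*2) * (N.choose (i+(k+1))) * (N.choose (j+(k+1)))
      = (-1:ℚ)^i * ((-1)^(i-1-k) * N.choose (i-1-k) * N.choose (2*i-(i-1-k)))
        + (-1:ℚ)^i * ((-1)^(i+(k+1)) * N.choose (i+(k+1)) * N.choose (2*i-(i+(k+1)))) := by
    intro k hk
    rw [mem_range] at hk
    obtain ⟨a, ha⟩ : ∃ a, i = a + k + 1 := ⟨i - k - 1, by omega⟩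
    subst ha
    rw [show a+k+1-1-k = a by omega, show 2*(a+k+1) - a = (a+k+1)+(k+1) by omega,
        show 2*(a+k+1) - ((a+k+1)+(k+1)) = a by omega,
        show N.choose (j+(k+1)) = N.choose a by
          rw [show a = N - (j + (k+1)) by omega, Nat.choose_symm (by omega)],
        if_neg (Nat.succ_ne_zero k)]
    have e1 : (-1:ℚ)^(a+k+1) * (-1)^a = (-1)^(k+1) := by
      rw [← pow_add, show a+k+1+a = 2*a + (k+1) by ring, pow_add, pow_mul, neg_one_sq,
        one_pow, one_mul]
    have e2 : (-1:ℚ)^(a+k+1) * (-1)^((a+k+1)+(k+1)) = (-1)^(k+1) := by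
      rw [← pow_add, show a+k+1+((a+k+1)+(k+1)) = 2*(a+k+1) + (k+1) by ring, pow_add,
        pow_mul, neg_one_sq, one_pow, one_mul]
    linear_combination (-((N.choose ((a+k+1)+(k+1)) : ℚ) * (N.choose a))) * e1 +
      (-((N.choose ((a+k+1)+(k+1)) : ℚ) * (N.choose a))) * e2
  rw [Finset.sum_congr rfl hterm, h0, Finset.sum_add_distrib]
  ring

lemma L3 (i j k : ℕ) :
    ((2*i).choose (i+k) : ℚ) * ((2*j).choose (j+k)) * (i+j).factorial * (i+j).factorial
      = ((i+j).choose (i+k)) * ((i+j).choose (j+k)) * (2*i).factorial * (2*j).factorial := by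
  rcases le_or_gt k i with hi | hi
  · rcases le_or_gt k j with hj | hj
    · rw [Nat.cast_choose ℚ (show i+k ≤ 2*i by omega),
        Nat.cast_choose ℚ (show j+k ≤ 2*j by omega),
        Nat.cast_choose ℚ (show i+k ≤ i+j by omega),
        Nat.cast_choose ℚ (show j+k ≤ i+j by omega),
        show 2*i - (i+k) = i-k by omega, show 2*j-(j+k) = j-k by omega,
        show i+j-(i+k) = j-k by omega, show i+j-(j+k) = i-k by omega]
      have f0 : ∀ m : ℕ, (m.factorial : ℚ) ≠ 0 :=
        fun m => Nat.cast_ne_zero.2 (Nat.factorial_ne_zero m)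
      field_simp
    · rw [Nat.choose_eq_zero_of_lt (show 2*j < j+k by omega),
        Nat.choose_eq_zero_of_lt (show i+j < i+k by omega)]
      push_cast; ring
  · rw [Nat.choose_eq_zero_of_lt (show 2*i < i+k by omega),
      Nat.choose_eq_zero_of_lt (show i+j < j+k by omega)]
    push_cast; ring


lemma L5 (i j : ℕ) :
    (∑ k ∈ range (i + 1), (if k = 0 then (1:ℚ) else (-1)^k * 2) *
        ((2*i).choose (i+k)) * ((2*j).choose (j+k))) * ((i+j).choose i : ℚ)
      = ((2*i).choose i : ℚ) * ((2*j).choose j) := by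
  have hNf : ((i+j).factorial : ℚ) ≠ 0 := Nat.cast_ne_zero.2 (Nat.factorial_ne_zero _)
  apply mul_right_cancel₀ (b := ((i+j).factorial : ℚ) * (i+j).factorial)
    (mul_ne_zero hNf hNf)
  have hs : (∑ k ∈ range (i + 1), (if k = 0 then (1:ℚ) else (-1)^k * 2) *
        ((2*i).choose (i+k)) * ((2*j).choose (j+k))) * (((i+j).factorial : ℚ) * (i+j).factorial)
      = (∑ k ∈ range (i + 1), (if k = 0 then (1:ℚ) else (-1)^k * 2) *
        ((i+j).choose (i+k)) * ((i+j).choose (j+k))) * (((2*i).factorial : ℚ) * (2*j).factorial) := by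
    rw [Finset.sum_mul, Finset.sum_mul]
    refine Finset.sum_congr rfl fun k _ => ?_
    linear_combination (if k = 0 then (1:ℚ) else (-1)^k * 2) * L3 i j k
  rw [L2] at hs
  have hk0 := L3 i j 0
  simp only [add_zero] at hk0
  have hsymm : (i+j).choose j = (i+j).choose i := by
    rw [← Nat.choose_symm (Nat.le_add_right i j)]
    congr 1
    omega
  rw [hsymm] at hk0
  linear_combination ((i+j).choose i : ℚ) * hs - hk0

theorem reciprocalPascal_factorization (n : ℕ) :
    (Matrix.of fun i j : Fin n => (1 : ℚ) / (Nat.choose ((i : ℕ) + (j : ℕ)) (i : ℕ))) =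
    (Matrix.diagonal fun m : Fin n => ((Nat.choose (2 * (m : ℕ)) (m : ℕ) : ℚ)))⁻¹ *
      (Matrix.of fun m k : Fin n => ((Nat.choose (2 * (m : ℕ)) ((m : ℕ) + (k : ℕ)) : ℚ))) *
      (Matrix.diagonal fun m : Fin n =>
        if (m : ℕ) = 0 then (1 : ℚ) else (-1) ^ (m : ℕ) * 2) *
      Matrix.transpose
        (Matrix.of fun m k : Fin n => ((Nat.choose (2 * (m : ℕ)) ((m : ℕ) + (k : ℕ)) : ℚ))) *
      (Matrix.diagonal fun m : Fin n => ((Nat.choose (2 * (m : ℕ)) (m : ℕ) : ℚ)))⁻¹ := by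
  have hpos : ∀ m : ℕ, ((2*m).choose m : ℚ) ≠ 0 := fun m =>
    Nat.cast_ne_zero.2 (Nat.choose_pos (by omega)).ne'
  have hinv : (Matrix.diagonal fun m : Fin n => ((2*(m:ℕ)).choose (m:ℕ) : ℚ))⁻¹
      = Matrix.diagonal (fun m : Fin n => (((2*(m:ℕ)).choose (m:ℕ) : ℚ))⁻¹) := by
    apply Matrix.inv_eq_right_inv
    rw [Matrix.diagonal_mul_diagonal,
      show (fun m : Fin n => ((2*(m:ℕ)).choose (m:ℕ) : ℚ) * (((2*(m:ℕ)).choose (m:ℕ) : ℚ))⁻¹)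
        = fun _ => (1:ℚ) from funext fun m => mul_inv_cancel₀ (hpos m), Matrix.diagonal_one]
  rw [hinv]
  ext i j
  rw [Matrix.mul_diagonal, Matrix.mul_apply]
  simp only [Matrix.mul_diagonal, Matrix.diagonal_mul, Matrix.transpose_apply,
    Matrix.of_apply, Pi.inv_apply]
  have h1 := hpos (i : ℕ)
  have h2 := hpos (j : ℕ)
  have h3 : (((i:ℕ)+(j:ℕ)).choose (i:ℕ) : ℚ) ≠ 0 :=
    Nat.cast_ne_zero.2 (Nat.choose_pos (by omega)).ne'
  have hstep : (∑ x : Fin n,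
        (((((2 * (i:ℕ)).choose (i:ℕ) : ℚ))⁻¹ * ((2 * (i:ℕ)).choose ((i:ℕ) + (x:ℕ))) *
            if (x:ℕ) = 0 then (1:ℚ) else (-1) ^ (x:ℕ) * 2) *
          ((2 * (j:ℕ)).choose ((j:ℕ) + (x:ℕ)) : ℚ)))
      = (((2 * (i:ℕ)).choose (i:ℕ) : ℚ))⁻¹ * ∑ k ∈ range ((i:ℕ) + 1),
          (if k = 0 then (1:ℚ) else (-1)^k * 2) *
            ((2*(i:ℕ)).choose ((i:ℕ)+k)) * ((2*(j:ℕ)).choose ((j:ℕ)+k)) := by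
    rw [Fin.sum_univ_eq_sum_range (fun k =>
        (((((2 * (i:ℕ)).choose (i:ℕ) : ℚ))⁻¹ * ((2 * (i:ℕ)).choose ((i:ℕ) + k)) *
            if k = 0 then (1:ℚ) else (-1) ^ k * 2) *
          ((2 * (j:ℕ)).choose ((j:ℕ) + k) : ℚ))) n]
    rw [← Finset.sum_subset (Finset.range_subset_range.2 i.isLt)
      (fun k _ hk => by
        rw [Nat.choose_eq_zero_of_lt (show 2*(i:ℕ) < (i:ℕ)+k by
          rw [Finset.mem_range, not_lt] at hk; omega)]
        push_cast; ring)]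
    rw [Finset.mul_sum]
    exact Finset.sum_congr rfl fun k _ => by ring
  rw [hstep]
  have hS := L5 (i:ℕ) (j:ℕ)
  set S := ∑ k ∈ range ((i:ℕ) + 1),
      (if k = 0 then (1:ℚ) else (-1)^k * 2) *
        ((2*(i:ℕ)).choose ((i:ℕ)+k)) * ((2*(j:ℕ)).choose ((j:ℕ)+k)) with hSdef
  field_simp
  linear_combination -hS
end

section
/- Let L be the n×n matrix with L(m,k) = C(2m,m+k) and D the diagonal matrix with D(0,0)=1, D(m,m)=(-1)^m·2 for m>0. Then column 0 of L⁻¹ equals the diagonal of D, i.e., L⁻¹(m,0) = D(m,m) for all 0 ≤ m < n. -/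
open Finset Matrix

private lemma key_sum (m : ℕ) :
    ∑ k ∈ range (m + 1),
      ((Nat.choose (2 * m) (m + k) : ℚ) * (if k = 0 then (1 : ℚ) else (-1) ^ k * 2)) =
      if m = 0 then 1 else 0 := by
  rcases Nat.eq_zero_or_pos m with hm | hm
  · subst hm; simp
  rw [if_neg hm.ne']
  set f : ℕ → ℚ := fun j => (-1) ^ j * (Nat.choose (2 * m) j : ℚ) with hf
  have hT : ∑ j ∈ range (2 * m + 1), f j = 0 := by
    have h := Int.alternating_sum_range_choose_of_ne (n := 2 * m) (by omega)
    have := congrArg (fun z : ℤ => (z : ℚ)) h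
    push_cast at this
    simpa [hf] using this
  have hsplit : (2 : ℕ) * m + 1 = m + (m + 1) := by omega
  rw [hsplit, Finset.sum_range_add] at hT
  rw [← Finset.sum_range_reflect (fun j => f j) m] at hT
  rw [Finset.sum_range_succ'] at hT
  -- hT : ∑ j < m, f (m - 1 - j) + (∑ i < m, f (m + (i+1)) + f (m + 0)) = 0
  have hrefl : ∀ j ∈ range m, f (m - 1 - j) = f (m + 1 + j) := by
    intro j hj
    rw [Finset.mem_range] at hj
    have hc : Nat.choose (2 * m) (m - 1 - j) = Nat.choose (2 * m) (m + 1 + j) := by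
      have h1 : m - 1 - j = 2 * m - (m + 1 + j) := by omega
      rw [h1]
      exact Nat.choose_symm (by omega)
    have hs : ((-1 : ℚ)) ^ (m - 1 - j) = (-1) ^ (m + 1 + j) := by
      have h2 : m + 1 + j = (m - 1 - j) + 2 * (j + 1) := by omega
      rw [h2, pow_add, pow_mul]
      norm_num
    simp only [hf, hc, hs]
  rw [Finset.sum_congr rfl hrefl] at hT
  -- Now hT : ∑ j < m, f (m+1+j) + (∑ i < m, f (m+(i+1)) + f (m+0)) = 0
  have hT2 : 2 * (∑ j ∈ range m, f (m + 1 + j)) + f m = 0 := by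
    have : ∀ i ∈ range m, f (m + (i + 1)) = f (m + 1 + i) := by
      intro i _; congr 1; omega
    rw [Finset.sum_congr rfl this] at hT
    rw [add_zero] at hT
    linarith [hT]
  rw [Finset.sum_range_succ']
  have hsq : (-1 : ℚ) ^ m * (-1) ^ m = 1 := by
    rw [← pow_add, ← two_mul, pow_mul]; norm_num
  have hterm : ∀ i ∈ range m,
      (Nat.choose (2 * m) (m + (i + 1)) : ℚ) *
        (if i + 1 = 0 then (1 : ℚ) else (-1) ^ (i + 1) * 2) =
      (-1) ^ m * (2 * f (m + 1 + i)) := by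
    intro i _
    rw [if_neg (Nat.succ_ne_zero i)]
    have harg : m + 1 + i = m + (i + 1) := by omega
    rw [hf]
    simp only [harg]
    linear_combination (2 * (-1 : ℚ) ^ i * (Nat.choose (2 * m) (m + (i + 1)) : ℚ)) * hsq
  rw [Finset.sum_congr rfl hterm, ← Finset.mul_sum, ← Finset.mul_sum]
  have h0 : (Nat.choose (2 * m) (m + 0) : ℚ) * (if (0 : ℕ) = 0 then (1 : ℚ) else (-1) ^ (0:ℕ) * 2)
      = (-1) ^ m * f m := by
    rw [if_pos rfl, hf, add_zero, mul_one, ← mul_assoc, ← pow_add]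
    have : (-1 : ℚ) ^ (m + m) = 1 := by
      rw [← two_mul, pow_mul]; norm_num
    rw [this, one_mul]
  rw [h0, ← mul_add, hT2, mul_zero]

theorem L_inv_first_column_eq_diag_D (n : ℕ) :
    ∀ m : Fin n,
      (Matrix.of fun m k : Fin n =>
          ((Nat.choose (2 * (m : ℕ)) ((m : ℕ) + (k : ℕ)) : ℚ)))⁻¹ m ⟨0, m.pos⟩ =
        (if (m : ℕ) = 0 then (1 : ℚ) else (-1) ^ (m : ℕ) * 2) := by
  intro m
  set A : Matrix (Fin n) (Fin n) ℚ :=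
    Matrix.of fun m k : Fin n => ((Nat.choose (2 * (m : ℕ)) ((m : ℕ) + (k : ℕ)) : ℚ)) with hA
  set z : Fin n := ⟨0, m.pos⟩ with hz
  set v : Fin n → ℚ := fun k => if (k : ℕ) = 0 then (1 : ℚ) else (-1) ^ (k : ℕ) * 2 with hv
  -- A is lower triangular with unit diagonal, hence det = 1
  have htri : A.BlockTriangular OrderDual.toDual := by
    intro i j hij
    have hij' : (i : ℕ) < (j : ℕ) := hij
    simp only [hA, Matrix.of_apply]
    exact_mod_cast Nat.choose_eq_zero_of_lt (by omega)
  have hdet : A.det = 1 := by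
    rw [Matrix.det_of_lowerTriangular A htri]
    apply Finset.prod_eq_one
    intro i _
    simp only [hA, Matrix.of_apply]
    rw [show (i : ℕ) + (i : ℕ) = 2 * (i : ℕ) by omega, Nat.choose_self]
    norm_num
  have hinv : A⁻¹ * A = 1 := Matrix.nonsing_inv_mul A (by rw [hdet]; exact isUnit_one)
  -- A *ᵥ v = Pi.single z 1
  have hAv : A *ᵥ v = Pi.single z 1 := by
    funext i
    rw [Matrix.mulVec, dotProduct]
    have hsum : ∑ j : Fin n, A i j * v j
        = ∑ j ∈ range n, (Nat.choose (2 * (i : ℕ)) ((i : ℕ) + j) : ℚ) *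
            (if j = 0 then (1 : ℚ) else (-1) ^ j * 2) := by
      rw [← Fin.sum_univ_eq_sum_range]
      rfl
    rw [hsum]
    rw [← Finset.sum_subset (Finset.range_subset_range.2 i.isLt)
      (by
        intro j hj hj'
        rw [Finset.mem_range] at hj hj'
        have : 2 * (i : ℕ) < (i : ℕ) + j := by omega
        rw [Nat.choose_eq_zero_of_lt this]
        norm_num)]
    rw [key_sum]
    rcases eq_or_ne i z with h | h
    · subst h
      simp [hz, Pi.single_eq_same]
    · have hne : (i : ℕ) ≠ 0 := by
        intro h0
        exact h (Fin.ext (by simp [hz, h0]))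
      rw [if_neg hne, Pi.single_eq_of_ne h]
  have : A⁻¹ *ᵥ (A *ᵥ v) = A⁻¹ *ᵥ Pi.single z 1 := by rw [hAv]
  rw [Matrix.mulVec_mulVec, hinv, Matrix.one_mulVec, Matrix.mulVec_single] at this
  have hm := congrFun this m
  simp only [MulOpposite.op_one, one_smul, Matrix.col_apply] at hm
  rw [← hm]
end

section
/- For n ≥ 1, with L the n×n matrix L(m,k)=C(2m,m+k), D⁻¹ the diagonal matrix with entries 1, -1/2, 1/2, ..., and entries L⁻¹(i,0) of the inverse of L, one has R⁻¹(0,0) = 1 + Σ_{i=1}^{n-1} (L⁻¹(i,0))² · D⁻¹(i,i), where R is the reciprocal Pascal matrix R(i,j)=1/C(i+j,i); in particular R⁻¹(0,0) is an integer. -/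
open Finset fwdDiff Matrix


private lemma fd_choose' (m : ℕ) :
    Δ_[1] (fun x : ℕ => (x.choose (m+1) : ℚ)) = fun x : ℕ => (x.choose m : ℚ) := by
  funext x
  simp only [fwdDiff, Nat.choose_succ_succ' x m]
  push_cast; ring

private lemma fd_iter_choose_self' (m : ℕ) :
    (Δ_[1])^[m] (fun x : ℕ => (x.choose m : ℚ)) = fun _ => 1 := by
  induction m with
  | zero => funext x; simp
  | succ m ih => rw [Function.iterate_succ_apply, fd_choose' m, ih]

private lemma fd_iter_zero' (t : ℕ) :
    (Δ_[1])^[t] (fun _ : ℕ => (0 : ℚ)) = fun _ => 0 := by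
  induction t with
  | zero => rfl
  | succ t ih => rw [Function.iterate_succ_apply, show Δ_[1] (fun _ : ℕ => (0:ℚ)) = fun _ => 0 from fwdDiff_const 1 0, ih]

private lemma fd_iter_choose_lt' {m k : ℕ} (h : m < k) :
    (Δ_[1])^[k] (fun x : ℕ => (x.choose m : ℚ)) = fun _ => 0 := by
  obtain ⟨t, rfl⟩ : ∃ t, k = t + (m+1) := ⟨k - (m+1), by omega⟩
  rw [Function.iterate_add_apply, Function.iterate_succ_apply', fd_iter_choose_self' m,
    show Δ_[1] (fun _ : ℕ => (1:ℚ)) = fun _ => 0 from fwdDiff_const 1 1, fd_iter_zero' t]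

private lemma fd_shift' (c : ℕ) (f : ℕ → ℚ) (k : ℕ) :
    (Δ_[1])^[k] (fun x => f (x + c)) = fun x => (Δ_[1])^[k] f (x + c) := by
  induction k generalizing f with
  | zero => rfl
  | succ k ih =>
      rw [Function.iterate_succ_apply, Function.iterate_succ_apply,
        show Δ_[1] (fun x => f (x + c)) = fun x => Δ_[1] f (x + c) from ?_, ih]
      funext x
      simp only [fwdDiff]
      rw [add_right_comm]

private lemma alt_sum_eq_fd (k : ℕ) (f : ℕ → ℚ) :
    ∑ j ∈ range (k+1), (-1:ℚ)^j * (k.choose j) * f j = (-1:ℚ)^k * (Δ_[1])^[k] f 0 := by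
  have hkk : (-1:ℚ)^k * (-1:ℚ)^k = 1 := by rw [← mul_pow]; norm_num
  rw [fwdDiff_iter_eq_sum_shift]
  rw [Finset.mul_sum]
  refine Finset.sum_congr rfl fun j hj => ?_
  have hjk : j ≤ k := Nat.lt_succ_iff.mp (mem_range.mp hj)
  have h1 : (-1:ℚ)^(k-j) * (-1:ℚ)^j = (-1:ℚ)^k := by
    rw [← pow_add, Nat.sub_add_cancel hjk]
  have h2 : (-1:ℚ)^(k-j) = (-1:ℚ)^k * (-1:ℚ)^j := by
    have hj2 : (-1:ℚ)^j * (-1:ℚ)^j = 1 := by rw [← mul_pow]; norm_num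
    calc (-1:ℚ)^(k-j) = (-1:ℚ)^(k-j) * ((-1:ℚ)^j * (-1:ℚ)^j) := by rw [hj2, mul_one]
    _ = (-1:ℚ)^k * (-1:ℚ)^j := by rw [← mul_assoc, h1]
  rw [zsmul_eq_mul]
  push_cast
  rw [h2]
  simp only [zero_add, smul_eq_mul, mul_one]
  have hk2 : (-1:ℚ)^(k*2) = 1 := by rw [mul_comm, pow_mul]; norm_num
  linear_combination (-((k.choose j : ℚ) * f j * (-1:ℚ)^j)) * hk2

private lemma choose_ratio {i k : ℕ} (hik : i ≤ k) (j : ℕ) :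
    ((k+j).choose j : ℚ) / ((i+j).choose i) = ((j+k).choose (k-i) : ℚ) / (k.choose i) := by
  have h1 : j ≤ k + j := Nat.le_add_left _ _
  have h2 : i ≤ i + j := Nat.le_add_right _ _
  have h3 : k - i ≤ j + k := by omega
  rw [Nat.cast_choose ℚ h1, Nat.cast_choose ℚ h2, Nat.cast_choose ℚ h3, Nat.cast_choose ℚ hik]
  rw [show k + j - j = k by omega, show i + j - i = j by omega,
    show j + k - (k - i) = i + j by omega,
    show j + k = k + j by omega]
  have f0 : ∀ a : ℕ, ((Nat.factorial a : ℕ) : ℚ) ≠ 0 := fun a => Nat.cast_ne_zero.mpr (Nat.factorial_ne_zero a)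
  field_simp

private lemma core_sum (k i : ℕ) (hik : i ≤ k) :
    ∑ j ∈ range (k+1), (-1:ℚ)^j * (k.choose j) * (((k+j).choose j : ℚ) / ((i+j).choose i)) =
      if i = 0 then (-1:ℚ)^k else 0 := by
  have hsplit : ∑ j ∈ range (k+1), (-1:ℚ)^j * (k.choose j) * (((k+j).choose j : ℚ) / ((i+j).choose i)) =
      (∑ j ∈ range (k+1), (-1:ℚ)^j * (k.choose j) * (((j+k).choose (k-i) : ℚ))) / (k.choose i) := by
    rw [Finset.sum_div]
    exact Finset.sum_congr rfl fun j _ => by rw [choose_ratio hik j]; ring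
  rw [hsplit, alt_sum_eq_fd k (fun x => (((x+k).choose (k-i) : ℚ))), fd_shift' k (fun x => ((x.choose (k-i) : ℚ))) k]
  simp only [zero_add]
  rcases Nat.eq_zero_or_pos i with hi | hi
  · subst hi
    rw [if_pos rfl, Nat.sub_zero, fd_iter_choose_self' k]
    simp
  · rw [if_neg (by omega), fd_iter_choose_lt' (show k - i < k by omega)]
    simp

private lemma npow_neg_one_congr {a b : ℕ} (h : a % 2 = b % 2) : (-1:ℚ)^a = (-1:ℚ)^b := by
  rcases Nat.even_or_odd a with ha | ha
  · have hb : Even b := Nat.even_iff.mpr (by rw [← h]; exact Nat.even_iff.mp ha)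
    rw [ha.neg_one_pow, hb.neg_one_pow]
  · have hb : Odd b := Nat.odd_iff.mpr (by rw [← h]; exact Nat.odd_iff.mp ha)
    rw [ha.neg_one_pow, hb.neg_one_pow]

private lemma central_alt {m : ℕ} (hm : 1 ≤ m) :
    ∑ k ∈ range (m+1), ((2*m).choose (m+k) : ℚ) * (if k = 0 then 1 else 2 * (-1:ℚ)^k) = 0 := by
  have hKz := Int.alternating_sum_range_choose_of_ne (show 2*m ≠ 0 by omega)
  have hK : ∑ j ∈ range (2*m+1), (-1:ℚ)^j * ((2*m).choose j) = 0 := by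
    have := congrArg (fun z : ℤ => (z : ℚ)) hKz
    push_cast at this
    simpa using this
  rw [show 2*m+1 = m + (m+1) by omega, Finset.sum_range_add] at hK
  -- reflect the first sum
  rw [← Finset.sum_range_reflect (fun j => (-1:ℚ)^j * ((2*m).choose j)) m] at hK
  have hrefl : ∀ j ∈ range m,
      (-1:ℚ)^(m-1-j) * (((2*m).choose (m-1-j) : ℕ) : ℚ)
        = (-1:ℚ)^(m+(j+1)) * (((2*m).choose (m+(j+1)) : ℕ) : ℚ) := by
    intro j hj
    have hjm : j < m := mem_range.mp hj
    have hc : (2*m).choose (m-1-j) = (2*m).choose (m+(j+1)) := by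
      rw [show m - 1 - j = 2*m - (m+(j+1)) by omega]
      exact Nat.choose_symm (by omega)
    rw [hc, npow_neg_one_congr (show (m-1-j) % 2 = (m+(j+1)) % 2 by omega)]
  rw [Finset.sum_congr rfl hrefl] at hK
  -- peel off k = 0 from the second sum
  rw [Finset.sum_range_succ' (fun k => (-1:ℚ)^(m+k) * ((2*m).choose (m+k))) m] at hK
  -- now hK : ∑_{j<m} (-1)^(m+j+1) C(2m, m+j+1) + (∑_{j<m} (-1)^(m+(j+1)) C(2m,m+(j+1)) + (-1)^(m+0) C(2m,m+0)) = 0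
  rw [Finset.sum_range_succ' (fun k => ((2*m).choose (m+k) : ℚ) * (if k = 0 then 1 else 2 * (-1:ℚ)^k)) m]
  simp only [if_neg (Nat.succ_ne_zero _), reduceIte, add_zero, mul_one] at *
  have hsgn : ∀ j : ℕ, (-1:ℚ)^(m+(j+1)) = (-1:ℚ)^m * (-1:ℚ)^(j+1) := fun j => pow_add _ _ _
  have hm1 : (-1:ℚ)^m * (-1:ℚ)^m = 1 := by rw [← mul_pow]; norm_num
  -- multiply hK by (-1)^m
  have hK2 := congrArg (fun x => (-1:ℚ)^m * x) hK
  simp only [mul_zero, mul_add, Finset.mul_sum] at hK2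
  have hfix : ∀ j ∈ range m, (-1:ℚ)^m * ((-1:ℚ)^(m+(j+1)) * (((2*m).choose (m+(j+1)) : ℕ) : ℚ))
      = (((2*m).choose (m+(j+1)) : ℕ) : ℚ) * (-1:ℚ)^(j+1) := by
    intro j _
    rw [hsgn j]
    calc (-1:ℚ)^m * ((-1:ℚ)^m * (-1:ℚ)^(j+1) * (((2*m).choose (m+(j+1)) : ℕ) : ℚ))
        = ((-1:ℚ)^m * (-1:ℚ)^m) * ((-1:ℚ)^(j+1) * (((2*m).choose (m+(j+1)) : ℕ) : ℚ)) := by ring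
      _ = (((2*m).choose (m+(j+1)) : ℕ) : ℚ) * (-1:ℚ)^(j+1) := by rw [hm1]; ring
  rw [Finset.sum_congr rfl hfix,
    show (-1:ℚ)^m * ((-1:ℚ)^m * (((2*m).choose m : ℕ) : ℚ)) = (((2*m).choose m : ℕ) : ℚ) from by
      rw [← mul_assoc, hm1, one_mul]] at hK2
  have hgoal : (∑ j ∈ range m, (((2*m).choose (m+(j+1)) : ℕ) : ℚ) * (2*(-1:ℚ)^(j+1)))
      = (∑ j ∈ range m, (((2*m).choose (m+(j+1)) : ℕ) : ℚ) * (-1:ℚ)^(j+1))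
        + (∑ j ∈ range m, (((2*m).choose (m+(j+1)) : ℕ) : ℚ) * (-1:ℚ)^(j+1)) := by
    rw [← Finset.sum_add_distrib]
    exact Finset.sum_congr rfl fun j _ => by ring
  rw [hgoal]
  linarith [hK2]

private def Rmat (n : ℕ) : Matrix (Fin n) (Fin n) ℚ :=
  Matrix.of fun i j : Fin n => (1 : ℚ) / (Nat.choose ((i : ℕ) + (j : ℕ)) (i : ℕ))

private def Wmat (n : ℕ) : Matrix (Fin n) (Fin n) ℚ :=
  Matrix.of fun k j : Fin n =>
    (-1:ℚ)^(j:ℕ) * ((k:ℕ).choose (j:ℕ)) * (((k:ℕ)+(j:ℕ)).choose (j:ℕ))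

private lemma choose_comm_symm (a b : ℕ) : (b + a).choose b = (a + b).choose a := by
  rw [add_comm b a]
  exact Nat.choose_symm_add.symm

private lemma R_symm (n : ℕ) : (Rmat n)ᵀ = Rmat n := by
  ext i j
  simp only [Matrix.transpose_apply, Rmat, Matrix.of_apply]
  rw [choose_comm_symm (i:ℕ) (j:ℕ)]

private lemma WR_entry (n : ℕ) (k i : Fin n) (hik : (i:ℕ) ≤ (k:ℕ)) :
    (Wmat n * Rmat n) k i = if (i:ℕ) = 0 then (-1:ℚ)^(k:ℕ) else 0 := by
  rw [Matrix.mul_apply]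
  have hterm : ∀ j : Fin n, Wmat n k j * Rmat n j i
      = (-1:ℚ)^(j:ℕ) * (((k:ℕ).choose (j:ℕ)) : ℚ)
        * (((((k:ℕ)+(j:ℕ)).choose (j:ℕ)) : ℚ) / ((((i:ℕ)+(j:ℕ)).choose (i:ℕ)) : ℚ)) := by
    intro j
    simp only [Wmat, Rmat, Matrix.of_apply]
    rw [choose_comm_symm (i:ℕ) (j:ℕ)]
    ring
  rw [Finset.sum_congr rfl fun j _ => hterm j]
  have hconv : ∑ j : Fin n, ((-1:ℚ)^(j:ℕ) * (((k:ℕ).choose (j:ℕ)) : ℚ)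
        * (((((k:ℕ)+(j:ℕ)).choose (j:ℕ)) : ℚ) / ((((i:ℕ)+(j:ℕ)).choose (i:ℕ)) : ℚ)))
      = ∑ j ∈ range n, ((-1:ℚ)^j * (((k:ℕ).choose j) : ℚ)
        * (((((k:ℕ)+j).choose j) : ℚ) / ((((i:ℕ)+j).choose (i:ℕ)) : ℚ))) :=
    Fin.sum_univ_eq_sum_range (fun j => ((-1:ℚ)^j * (((k:ℕ).choose j) : ℚ)
        * (((((k:ℕ)+j).choose j) : ℚ) / ((((i:ℕ)+j).choose (i:ℕ)) : ℚ)))) n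
  rw [hconv]
  rw [← Finset.sum_subset (Finset.range_subset_range.mpr (show (k:ℕ)+1 ≤ n from k.isLt)) ?hz]
  · rw [core_sum (k:ℕ) (i:ℕ) hik]
  case hz =>
    intro j _ hj
    have hkj : (k:ℕ) < j := by
      simp only [Finset.mem_range, not_lt] at hj
      omega
    rw [Nat.choose_eq_zero_of_lt hkj]
    simp

private lemma WRWt_le (n : ℕ) (hn : 1 ≤ n) (k l : Fin n) (hlk : (l:ℕ) ≤ (k:ℕ)) :
    (Wmat n * Rmat n * (Wmat n)ᵀ) k l = (-1:ℚ)^(k:ℕ) := by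
  rw [Matrix.mul_apply]
  rw [Finset.sum_eq_single (⟨0, hn⟩ : Fin n)]
  · rw [Matrix.transpose_apply, WR_entry n k ⟨0,hn⟩ (Nat.zero_le _), if_pos rfl]
    simp [Wmat]
  · intro i _ hi
    have hi0 : (i:ℕ) ≠ 0 := fun h => hi (Fin.ext h)
    rcases le_or_gt (i:ℕ) (l:ℕ) with hil | hli
    · rw [WR_entry n k i (le_trans hil hlk), if_neg hi0, zero_mul]
    · rw [Matrix.transpose_apply]
      simp only [Wmat, Matrix.of_apply]
      rw [Nat.choose_eq_zero_of_lt hli]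
      simp
  · intro h; exact absurd (Finset.mem_univ _) h

private lemma WRWt (n : ℕ) (hn : 1 ≤ n) :
    Wmat n * Rmat n * (Wmat n)ᵀ
      = Matrix.of fun k l : Fin n => (-1:ℚ)^(max (k:ℕ) (l:ℕ)) := by
  have hsym : (Wmat n * Rmat n * (Wmat n)ᵀ)ᵀ = Wmat n * Rmat n * (Wmat n)ᵀ := by
    rw [Matrix.transpose_mul, Matrix.transpose_mul, Matrix.transpose_transpose, R_symm,
      ← Matrix.mul_assoc]
  ext k l
  rcases le_total (l:ℕ) (k:ℕ) with h | h
  · rw [WRWt_le n hn k l h, Matrix.of_apply, max_eq_left h]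
  · have h2 := congrFun (congrFun hsym k) l
    rw [Matrix.of_apply, max_eq_right h, ← h2, Matrix.transpose_apply, WRWt_le n hn l k h]

private lemma Bker (n : ℕ) (v : Fin n → ℚ)
    (hv : (Matrix.of fun k l : Fin n => (-1:ℚ)^(max (k:ℕ) (l:ℕ))) *ᵥ v = 0) : v = 0 := by
  have key : ∀ t : ℕ, ∀ l : Fin n, (l:ℕ) = t → v l = 0 := by
    intro t
    induction t using Nat.strong_induction_on with
    | _ t IH =>
      intro l hlt
      subst hlt
      have IH' : ∀ j : Fin n, (j:ℕ) < (l:ℕ) → v j = 0 := fun j hj => IH _ hj j rfl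
      have hpow : (-1:ℚ)^(l:ℕ) ≠ 0 := pow_ne_zero _ (by norm_num)
      rcases lt_or_ge ((l:ℕ)+1) n with hA | hB
      · -- use rows l and l+1
        have h1 := congrFun hv l
        have h2 := congrFun hv (⟨(l:ℕ)+1, hA⟩ : Fin n)
        simp only [Matrix.mulVec, dotProduct, Matrix.of_apply, Pi.zero_apply] at h1 h2
        have h3 : ∑ j : Fin n,
            (((-1:ℚ)^(max (l:ℕ) (j:ℕ)) - (-1:ℚ)^(max ((l:ℕ)+1) (j:ℕ))) * v j) = 0 := by
          simp only [sub_mul]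
          rw [Finset.sum_sub_distrib, h1, h2, sub_zero]
        rw [Finset.sum_eq_single l] at h3
        · rw [max_self, max_eq_left (Nat.le_succ _)] at h3
          have hc : ((-1:ℚ)^(l:ℕ) - (-1:ℚ)^((l:ℕ)+1)) = 2 * (-1:ℚ)^(l:ℕ) := by
            rw [pow_succ]; ring
          rw [hc] at h3
          rcases mul_eq_zero.mp h3 with h | h
          · exact ((mul_ne_zero two_ne_zero hpow) h).elim
          · exact h
        · intro j _ hj
          rcases lt_or_gt_of_ne (fun h => hj (Fin.ext h) : (j:ℕ) ≠ (l:ℕ)) with hjl | hjl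
          · rw [IH' j hjl, mul_zero]
          · rw [max_eq_right hjl.le, max_eq_right hjl, sub_self, zero_mul]
        · intro h; exact absurd (Finset.mem_univ _) h
      · -- last row
        have h1 := congrFun hv l
        simp only [Matrix.mulVec, dotProduct, Matrix.of_apply, Pi.zero_apply] at h1
        rw [Finset.sum_eq_single l] at h1
        · rw [max_self] at h1
          rcases mul_eq_zero.mp h1 with h | h
          · exact absurd h hpow
          · exact h
        · intro j _ hj
          have hjl : (j:ℕ) < (l:ℕ) := by
            have := j.isLt
            have hne : (j:ℕ) ≠ (l:ℕ) := fun h => hj (Fin.ext h)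
            omega
          rw [IH' j hjl, mul_zero]
        · intro h; exact absurd (Finset.mem_univ _) h
  funext l
  exact key (l:ℕ) l rfl

private lemma detR_ne (n : ℕ) (hn : 1 ≤ n) : (Rmat n).det ≠ 0 := by
  have hdetB : (Matrix.of fun k l : Fin n => (-1:ℚ)^(max (k:ℕ) (l:ℕ))).det ≠ 0 := by
    intro h
    obtain ⟨v, hv0, hv⟩ := (Matrix.exists_mulVec_eq_zero_iff).mpr h
    exact hv0 (Bker n v hv)
  rw [← WRWt n hn, Matrix.det_mul, Matrix.det_mul] at hdetB
  intro h
  apply hdetB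
  rw [h]
  ring

private lemma Rinv00 (n : ℕ) (hn : 1 ≤ n) :
    (Rmat n)⁻¹ ⟨0,hn⟩ ⟨0,hn⟩ = (-1:ℚ)^(n-1) := by
  have hlast : n - 1 < n := by omega
  set w : Fin n → ℚ := fun j => (-1:ℚ)^(n-1) * Wmat n ⟨n-1,hlast⟩ j with hw
  have hRw : Rmat n *ᵥ w = Pi.single (⟨0,hn⟩ : Fin n) 1 := by
    funext i
    simp only [Matrix.mulVec, dotProduct, hw]
    have hterm : ∀ j : Fin n, Rmat n i j * ((-1:ℚ)^(n-1) * Wmat n ⟨n-1,hlast⟩ j)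
        = (-1:ℚ)^(n-1) * (Wmat n ⟨n-1,hlast⟩ j * Rmat n j i) := by
      intro j
      have hs := congrFun (congrFun (R_symm n) j) i
      rw [Matrix.transpose_apply] at hs
      rw [← hs]
      ring
    rw [Finset.sum_congr rfl fun j _ => hterm j, ← Finset.mul_sum, ← Matrix.mul_apply,
      WR_entry n ⟨n-1,hlast⟩ i (show (i:ℕ) ≤ n-1 from Nat.le_sub_one_of_lt i.isLt)]
    rcases eq_or_ne ((i:ℕ)) 0 with h0 | h0
    · rw [if_pos h0]
      have hi : i = ⟨0,hn⟩ := Fin.ext h0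
      rw [hi, Pi.single_eq_same]
      rw [← mul_pow]
      norm_num
    · rw [if_neg h0, mul_zero]
      rw [Pi.single_eq_of_ne (fun h => h0 (by rw [h]) : i ≠ ⟨0,hn⟩)]
  have hIsUnit : IsUnit (Rmat n).det := isUnit_iff_ne_zero.mpr (detR_ne n hn)
  have h1 : (Rmat n)⁻¹ *ᵥ (Rmat n *ᵥ w) = w := by
    rw [Matrix.mulVec_mulVec, Matrix.nonsing_inv_mul _ hIsUnit, Matrix.one_mulVec]
  rw [hRw] at h1
  have h2 := congrFun h1 ⟨0,hn⟩
  rw [Matrix.mulVec_single] at h2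
  simp only [MulOpposite.op_one, one_smul, Matrix.col_apply] at h2
  rw [h2, hw]
  simp [Wmat]

private def Lmat (n : ℕ) : Matrix (Fin n) (Fin n) ℚ :=
  Matrix.of fun m k : Fin n => ((Nat.choose (2 * (m : ℕ)) ((m : ℕ) + (k : ℕ)) : ℚ))

private lemma detL (n : ℕ) : (Lmat n).det = 1 := by
  have ht : (Lmat n).BlockTriangular OrderDual.toDual := by
    intro i j hij
    have hlt : (i:ℕ) < (j:ℕ) := hij
    simp only [Lmat, Matrix.of_apply]
    rw [Nat.choose_eq_zero_of_lt (by omega)]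
    exact Nat.cast_zero
  rw [Matrix.det_of_lowerTriangular (Lmat n) ht]
  have hdiag : ∀ i : Fin n, Lmat n i i = 1 := by
    intro i
    simp only [Lmat, Matrix.of_apply]
    rw [show (i:ℕ)+(i:ℕ) = 2*(i:ℕ) by ring, Nat.choose_self]
    exact Nat.cast_one
  rw [Finset.prod_congr rfl fun i _ => hdiag i, Finset.prod_const_one]

private lemma Lv (n : ℕ) (hn : 1 ≤ n) :
    Lmat n *ᵥ (fun k : Fin n => if (k:ℕ) = 0 then (1:ℚ) else 2 * (-1:ℚ)^(k:ℕ))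
      = Pi.single (⟨0,hn⟩ : Fin n) 1 := by
  funext m
  simp only [Matrix.mulVec, dotProduct, Lmat, Matrix.of_apply]
  rcases eq_or_ne ((m:ℕ)) 0 with h0 | h0
  · rw [show m = ⟨0,hn⟩ from Fin.ext h0, Pi.single_eq_same]
    rw [Finset.sum_eq_single (⟨0,hn⟩ : Fin n)]
    · norm_num
    · intro k _ hk
      have hk0 : 0 < (k:ℕ) := Nat.pos_of_ne_zero (fun h => hk (Fin.ext h))
      rw [Nat.choose_eq_zero_of_lt (by simpa using hk0)]
      simp
    · intro h; exact absurd (Finset.mem_univ _) h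
  · rw [Pi.single_eq_of_ne (fun h => h0 (by rw [h]) : m ≠ ⟨0,hn⟩)]
    have hm1 : 1 ≤ (m:ℕ) := Nat.pos_of_ne_zero h0
    rw [Fin.sum_univ_eq_sum_range
      (fun k => ((2*(m:ℕ)).choose ((m:ℕ)+k) : ℚ) * (if k = 0 then (1:ℚ) else 2*(-1:ℚ)^k)) n]
    rw [← Finset.sum_subset (Finset.range_subset_range.mpr (show (m:ℕ)+1 ≤ n from m.isLt)) ?hz]
    · exact central_alt hm1
    case hz =>
      intro k _ hk
      have hmk : 2*(m:ℕ) < (m:ℕ)+k := by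
        simp only [Finset.mem_range, not_lt] at hk
        omega
      rw [Nat.choose_eq_zero_of_lt hmk]
      simp

private lemma Linv_col0 (n : ℕ) (hn : 1 ≤ n) (i : Fin n) :
    (Lmat n)⁻¹ i ⟨0,hn⟩ = if (i:ℕ) = 0 then (1:ℚ) else 2 * (-1:ℚ)^(i:ℕ) := by
  have hIsUnit : IsUnit (Lmat n).det := by rw [detL]; exact isUnit_one
  have h1 : (Lmat n)⁻¹ *ᵥ (Lmat n *ᵥ (fun k : Fin n => if (k:ℕ) = 0 then (1:ℚ) else 2 * (-1:ℚ)^(k:ℕ)))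
      = (fun k : Fin n => if (k:ℕ) = 0 then (1:ℚ) else 2 * (-1:ℚ)^(k:ℕ)) := by
    rw [Matrix.mulVec_mulVec, Matrix.nonsing_inv_mul _ hIsUnit, Matrix.one_mulVec]
  rw [Lv n hn] at h1
  have h2 := congrFun h1 i
  rw [Matrix.mulVec_single] at h2
  simpa using h2

private lemma final_sum (m : ℕ) :
    1 + ∑ j ∈ range (m+1), (if j = 0 then (0:ℚ) else 2 * (-1:ℚ)^j) = (-1:ℚ)^m := by
  induction m with
  | zero => simp
  | succ m ih =>
      rw [Finset.sum_range_succ, if_neg (Nat.succ_ne_zero m), ← add_assoc, ih, pow_succ]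
      ring

theorem R_inv_zero_zero (n : ℕ) (hn : 1 ≤ n) :
    ((Matrix.of fun i j : Fin n =>
        (1 : ℚ) / (Nat.choose ((i : ℕ) + (j : ℕ)) (i : ℕ)))⁻¹ ⟨0, hn⟩ ⟨0, hn⟩ =
      1 + ∑ i : Fin n, if (i : ℕ) = 0 then 0 else
        ((Matrix.of fun m k : Fin n =>
            ((Nat.choose (2 * (m : ℕ)) ((m : ℕ) + (k : ℕ)) : ℚ)))⁻¹ i ⟨0, hn⟩) ^ 2 *
          ((-1 : ℚ) ^ (i : ℕ) / 2)) ∧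
    ∃ z : ℤ,
      (Matrix.of fun i j : Fin n =>
        (1 : ℚ) / (Nat.choose ((i : ℕ) + (j : ℕ)) (i : ℕ)))⁻¹ ⟨0, hn⟩ ⟨0, hn⟩ = (z : ℚ) := by
  obtain ⟨m, rfl⟩ : ∃ m, n = m + 1 := ⟨n-1, by omega⟩
  have hR00 : (Rmat (m+1))⁻¹ ⟨0,hn⟩ ⟨0,hn⟩ = (-1:ℚ)^m := by
    rw [Rinv00 (m+1) hn]
    norm_num
  have hRdef : (Matrix.of fun i j : Fin (m+1) =>
      (1 : ℚ) / (Nat.choose ((i : ℕ) + (j : ℕ)) (i : ℕ))) = Rmat (m+1) := rfl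
  have hLdef : (Matrix.of fun m' k : Fin (m+1) =>
      ((Nat.choose (2 * (m' : ℕ)) ((m' : ℕ) + (k : ℕ)) : ℚ))) = Lmat (m+1) := rfl
  rw [hRdef, hLdef]
  constructor
  · rw [hR00]
    have hterm : ∀ i : Fin (m+1),
        (if (i : ℕ) = 0 then (0:ℚ) else
          ((Lmat (m+1))⁻¹ i ⟨0, hn⟩) ^ 2 * ((-1 : ℚ) ^ (i : ℕ) / 2))
        = (if (i:ℕ) = 0 then (0:ℚ) else 2 * (-1:ℚ)^(i:ℕ)) := by
      intro i
      rcases eq_or_ne ((i:ℕ)) 0 with h0 | h0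
      · rw [if_pos h0, if_pos h0]
      · rw [if_neg h0, if_neg h0, Linv_col0 (m+1) hn i, if_neg h0]
        have hsq : ((-1:ℚ)^(i:ℕ))^2 = 1 := by
          rw [← pow_mul, mul_comm, pow_mul]
          norm_num
        linear_combination (2 * (-1:ℚ)^(i:ℕ)) * hsq
    rw [Finset.sum_congr rfl fun i _ => hterm i]
    rw [Fin.sum_univ_eq_sum_range (fun j => (if j = 0 then (0:ℚ) else 2 * (-1:ℚ)^j)) (m+1)]
    exact (final_sum m).symm
  · exact ⟨(-1:ℤ)^m, by rw [hR00]; push_cast; ring⟩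
end

section
/- For all nonnegative integers i and j, C(2i,i)·C(2j,j) is divisible by C(i+j,i); equivalently, C(i+j,i) divides C(2i,i)·C(2j,j) in ℤ. -/
open Nat Finset

private lemma key_div (q a b : ℕ) : (a + b) / q + (a / q + b / q) ≤ 2 * a / q + 2 * b / q := by
  rcases Nat.eq_zero_or_pos q with hq | hq
  · subst hq; simp
  have ha := Nat.div_add_mod a q
  have hb := Nat.div_add_mod b q
  have h2a : 2 * a / q = 2 * (a / q) + 2 * (a % q) / q := by
    conv_lhs => rw [← ha]
    rw [Nat.mul_add, ← Nat.mul_assoc, Nat.mul_comm 2 q, Nat.mul_assoc,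
      Nat.mul_add_div hq]
  have h2b : 2 * b / q = 2 * (b / q) + 2 * (b % q) / q := by
    conv_lhs => rw [← hb]
    rw [Nat.mul_add, ← Nat.mul_assoc, Nat.mul_comm 2 q, Nat.mul_assoc,
      Nat.mul_add_div hq]
  have hab : (a + b) / q = a / q + b / q + (a % q + b % q) / q := by
    conv_lhs => rw [← ha, ← hb]
    rw [show q * (a / q) + a % q + (q * (b / q) + b % q)
        = q * (a / q + b / q) + (a % q + b % q) by ring, Nat.mul_add_div hq]
  rw [h2a, h2b, hab]
  have hr : a % q < q := Nat.mod_lt _ hq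
  have hs : b % q < q := Nat.mod_lt _ hq
  have hkey : (a % q + b % q) / q ≤ 2 * (a % q) / q + 2 * (b % q) / q := by
    rcases Nat.lt_or_ge (a % q + b % q) q with h | h
    · rw [Nat.div_eq_of_lt h]; exact Nat.zero_le _
    · have h1 : (a % q + b % q) / q = 1 :=
        Nat.div_eq_of_lt_le (by omega) (by omega)
      rw [h1]
      rcases le_or_gt (a % q) (b % q) with h2 | h2
      · have h3 : 1 ≤ 2 * (b % q) / q := (Nat.one_le_div_iff hq).mpr (by omega)
        exact h3.trans (Nat.le_add_left _ _)
      · have h3 : 1 ≤ 2 * (a % q) / q := (Nat.one_le_div_iff hq).mpr (by omega)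
        exact h3.trans (Nat.le_add_right _ _)
  omega

private lemma fac_dvd (i j : ℕ) :
    (i + j)! * (i ! * j !) ∣ (2 * i)! * (2 * j)! := by
  have hne : (i + j)! * (i ! * j !) ≠ 0 := by positivity
  have hne2 : (2 * i)! * (2 * j)! ≠ 0 := by positivity
  rw [← Nat.factorization_le_iff_dvd hne hne2]
  intro p
  by_cases hp : p.Prime
  · haveI := Fact.mk hp
    have hfe : ∀ n : ℕ, n ≤ 2 * (i + j) →
        (n !).factorization p
          = ∑ k ∈ Finset.Ico 1 (Nat.log p (2 * (i + j)) + 1), n / p ^ k := by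
      intro n hn
      rw [Nat.factorization_def _ hp]
      exact padicValNat_factorial (Nat.lt_succ_of_le (Nat.log_mono_right hn))
    rw [Nat.factorization_mul ((Nat.factorial_pos _).ne')
        (Nat.mul_ne_zero (Nat.factorial_pos _).ne' (Nat.factorial_pos _).ne'),
      Nat.factorization_mul ((Nat.factorial_pos _).ne') ((Nat.factorial_pos _).ne'),
      Nat.factorization_mul ((Nat.factorial_pos _).ne') ((Nat.factorial_pos _).ne')]
    simp only [Finsupp.coe_add, Pi.add_apply]
    rw [hfe (i + j) (by omega), hfe i (by omega), hfe j (by omega),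
      hfe (2 * i) (by omega), hfe (2 * j) (by omega),
      ← Finset.sum_add_distrib, ← Finset.sum_add_distrib, ← Finset.sum_add_distrib]
    exact Finset.sum_le_sum fun k _ => key_div (p ^ k) i j
  · simp [Nat.factorization_eq_zero_of_not_prime _ hp]

theorem choose_dvd_centralBinom_mul (i j : ℕ) :
    Nat.choose (i + j) i ∣ Nat.choose (2 * i) i * Nat.choose (2 * j) j := by
  have h1 : (i + j).choose i * (i ! * j !) = (i + j)! := by
    have := Nat.choose_mul_factorial_mul_factorial (Nat.le_add_right i j)
    simp only [Nat.add_sub_cancel_left] at this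
    rw [← this]; ring
  have h2 : (2 * i).choose i * (i ! * i !) = (2 * i)! := by
    have := Nat.choose_mul_factorial_mul_factorial (show i ≤ 2 * i by omega)
    have h : 2 * i - i = i := by omega
    rw [h] at this
    rw [← this]; ring
  have h3 : (2 * j).choose j * (j ! * j !) = (2 * j)! := by
    have := Nat.choose_mul_factorial_mul_factorial (show j ≤ 2 * j by omega)
    have h : 2 * j - j = j := by omega
    rw [h] at this
    rw [← this]; ring
  have key := fac_dvd i j
  rw [← h1, ← h2, ← h3] at key
  have hpos : 0 < i ! * j ! * (i ! * j !) := by positivity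
  refine (Nat.mul_dvd_mul_iff_right hpos).mp ?_
  have e1 : (i + j).choose i * (i ! * j ! * (i ! * j !))
      = (i + j).choose i * (i ! * j !) * (i ! * j !) := by ring
  have e2 : (2 * i).choose i * (2 * j).choose j * (i ! * j ! * (i ! * j !))
      = (2 * i).choose i * (i ! * i !) * ((2 * j).choose j * (j ! * j !)) := by ring
  rw [e1, e2]
  exact key
end
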